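/- arXiv:1404.6546 — 6 statements merged into one kernel-verified Lean document; each statement's English description precedes it below -/
import Mathlib

section
/- Suppose δ : I → ℝ satisfies δ ∈ P and there exists π : T → ℝ such that the price conditions hold for (δ, π). Then δ maximizes the surplus S over P, i.e., for every δ' ∈ P one has S(δ') ≤ S(δ). -/
/-- If `δ` is feasible (clearing and bound constraints) and there exist
prices `π` such that the price conditions hold for `(δ, π)`, then `δ` maximizes the
economic surplus over the feasible polytope. -/
theorem price_conditions_imply_surplus_maximal
    {I T : Type*} [Fintype I] [Fintype T]
    (Q p : I → T → ℤ) (δbar : I → ℕ)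
    (δ : I → ℝ)
    (hclear : ∀ t, ∑ i, (Q i t : ℝ) * δ i = 0)
    (hbnd : ∀ i, 0 ≤ δ i ∧ δ i ≤ (δbar i : ℝ))
    (π : T → ℝ)
    (hprice : ∀ i : I,
        (0 < δ i → 0 ≤ ∑ t, ((p i t : ℝ) - π t) * (Q i t : ℝ)) ∧
        (δ i < (δbar i : ℝ) → ∑ t, ((p i t : ℝ) - π t) * (Q i t : ℝ) ≤ 0)) :
    ∀ δ' : I → ℝ,
      (∀ t, ∑ i, (Q i t : ℝ) * δ' i = 0) →
      (∀ i, 0 ≤ δ' i ∧ δ' i ≤ (δbar i : ℝ)) →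
      ∑ i, δ' i * ∑ t, (p i t : ℝ) * (Q i t : ℝ)
        ≤ ∑ i, δ i * ∑ t, (p i t : ℝ) * (Q i t : ℝ) := by
  intro δ' hclear' hbnd'
  -- key: Σ_i (δ' i - δ i) * Σ_t (p - π) Q ≤ 0, and the π-part vanishes.
  have hπ : ∀ (d : I → ℝ), (∀ t, ∑ i, (Q i t : ℝ) * d i = 0) →
      ∑ i, d i * ∑ t, π t * (Q i t : ℝ) = 0 := by
    intro d hd
    have h1 : ∑ i, d i * ∑ t, π t * (Q i t : ℝ)
        = ∑ t, π t * ∑ i, (Q i t : ℝ) * d i := by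
      simp_rw [Finset.mul_sum]
      rw [Finset.sum_comm]
      exact Finset.sum_congr rfl fun t _ => Finset.sum_congr rfl fun i _ => by ring
    simp [h1, hd]
  have key : ∑ i, (δ' i - δ i) * ∑ t, ((p i t : ℝ) - π t) * (Q i t : ℝ) ≤ 0 := by
    apply Finset.sum_nonpos
    intro i _
    set c := ∑ t, ((p i t : ℝ) - π t) * (Q i t : ℝ) with hc
    rcases lt_trichotomy c 0 with h | h | h
    · -- c < 0: then not (0 < δ i), so δ i = 0, δ' i - δ i ≥ 0
      have hδ0 : δ i = 0 := by
        by_contra hne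
        have := (hprice i).1 (lt_of_le_of_ne (hbnd i).1 (Ne.symm hne))
        linarith
      have : 0 ≤ δ' i - δ i := by rw [hδ0]; simpa using (hbnd' i).1
      nlinarith
    · simp [h]
    · -- c > 0: then δ i = δbar i, δ' i - δ i ≤ 0
      have hδb : δ i = (δbar i : ℝ) := by
        by_contra hne
        have := (hprice i).2 (lt_of_le_of_ne (hbnd i).2 hne)
        linarith
      have : δ' i - δ i ≤ 0 := by rw [hδb]; linarith [(hbnd' i).2]
      nlinarith
  have expand : ∑ i, (δ' i - δ i) * ∑ t, ((p i t : ℝ) - π t) * (Q i t : ℝ)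
      = (∑ i, δ' i * ∑ t, (p i t : ℝ) * (Q i t : ℝ))
        - (∑ i, δ i * ∑ t, (p i t : ℝ) * (Q i t : ℝ))
        - (∑ i, δ' i * ∑ t, π t * (Q i t : ℝ))
        + (∑ i, δ i * ∑ t, π t * (Q i t : ℝ)) := by
    rw [← Finset.sum_sub_distrib, ← Finset.sum_sub_distrib, ← Finset.sum_add_distrib]
    apply Finset.sum_congr rfl
    intro i _
    rw [show ∑ t, ((p i t : ℝ) - π t) * (Q i t : ℝ)
        = ∑ t, (p i t : ℝ) * (Q i t : ℝ) - ∑ t, π t * (Q i t : ℝ) from by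
      rw [← Finset.sum_sub_distrib]
      exact Finset.sum_congr rfl fun t _ => by ring]
    ring
  rw [expand, hπ δ' hclear', hπ δ hclear] at key
  linarith
end

section
/- Suppose δ* ∈ P maximizes the surplus S over P. Then there exists π : T → ℝ such that the price conditions hold for (δ*, π). -/
open Finset

section Cone

variable {H : Type*} [NormedAddCommGroup H] [InnerProductSpace ℝ H] [FiniteDimensional ℝ H]
variable {ι : Type*} [Fintype ι] [DecidableEq ι]

/-- The cone generated by the vectors `g k`, `k ∈ s`. -/
def coneIn (g : ι → H) (s : Finset ι) : Set H :=
  {x | ∃ l : ι → ℝ, (∀ k, 0 ≤ l k) ∧ ∑ k ∈ s, l k • g k = x}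

lemma coneIn_mono (g : ι → H) {s s' : Finset ι} (h : s ⊆ s') :
    coneIn g s ⊆ coneIn g s' := by
  rintro x ⟨l, hl, rfl⟩
  refine ⟨fun k => if k ∈ s then l k else 0, fun k => by by_cases h : k ∈ s <;> simp [h, hl k], ?_⟩
  rw [← Finset.sum_subset h (fun k _ hk => by simp [hk])]
  exact Finset.sum_congr rfl fun k hk => by simp [hk]

lemma exists_li_subset (g : ι → H) (s : Finset ι) :
    ∀ x ∈ coneIn g s, ∃ s' ⊆ s,
      LinearIndependent ℝ (fun k : s' => g k) ∧ x ∈ coneIn g s' := by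
  induction s using Finset.strongInduction with
  | _ s IH =>
    intro x hx
    by_cases hli : LinearIndependent ℝ (fun k : s => g k)
    · exact ⟨s, le_refl _, hli, hx⟩
    · obtain ⟨c, hc0, k1, hk1⟩ := Fintype.not_linearIndependent_iff.mp hli
      obtain ⟨l, hl, rfl⟩ := hx
      -- extend c to ι
      set C : ι → ℝ := fun k => if h : k ∈ s then c ⟨k, h⟩ else 0 with hC
      have hCsum : ∑ k ∈ s, C k • g k = 0 := by
        rw [← Finset.sum_attach s (fun k => C k • g k)]
        simpa [hC] using hc0
      have hCne : ∃ k ∈ s, C k ≠ 0 := ⟨k1, k1.2, by simp [hC, k1.2, hk1]⟩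
      -- wlog there is a positive coefficient
      have key : ∀ C : ι → ℝ, (∑ k ∈ s, C k • g k = 0) → (∃ k ∈ s, 0 < C k) →
          ∃ s' ⊆ s, LinearIndependent ℝ (fun k : s' => g k) ∧
            (∑ k ∈ s, l k • g k) ∈ coneIn g s' := by
        intro C hCsum ⟨k2, hk2s, hk2⟩
        set sc := s.filter (fun k => 0 < C k) with hsc
        have hscne : sc.Nonempty := ⟨k2, by simp [hsc, hk2s, hk2]⟩
        obtain ⟨k0, hk0, hk0min⟩ := Finset.exists_min_image sc (fun k => l k / C k) hscne
        have hk0s : k0 ∈ s := (Finset.mem_filter.mp hk0).1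
        have hk0C : 0 < C k0 := (Finset.mem_filter.mp hk0).2
        set t := l k0 / C k0 with ht
        have ht0 : 0 ≤ t := div_nonneg (hl k0) hk0C.le
        set l' : ι → ℝ := fun k => if k ∈ s then l k - t * C k else l k with hl'
        have hl'0 : ∀ k, 0 ≤ l' k := by
          intro k
          simp only [hl']
          split
          · rename_i hks
            rcases le_or_gt (C k) 0 with h | h
            · nlinarith [hl k]
            · have : t ≤ l k / C k := hk0min k (Finset.mem_filter.mpr ⟨hks, h⟩)
              rw [le_div_iff₀ h] at this
              linarith
          · exact hl k
        have hl'k0 : l' k0 = 0 := by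
          simp [hl', hk0s, ht]
          field_simp
          ring
        have hsum' : ∑ k ∈ s, l' k • g k = ∑ k ∈ s, l k • g k := by
          have : ∑ k ∈ s, l' k • g k
              = ∑ k ∈ s, (l k • g k - t • (C k • g k)) := by
            refine Finset.sum_congr rfl fun k hk => ?_
            simp [hl', hk, sub_smul, smul_smul]
          rw [this, Finset.sum_sub_distrib, ← Finset.smul_sum, hCsum, smul_zero, sub_zero]
        have hxerase : (∑ k ∈ s, l k • g k) ∈ coneIn g (s.erase k0) := by
          refine ⟨l', hl'0, ?_⟩
          rw [← hsum', ← Finset.add_sum_erase s _ hk0s, hl'k0, zero_smul, zero_add]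
        obtain ⟨s', hs', hli', hx'⟩ := IH (s.erase k0) (Finset.erase_ssubset hk0s) _ hxerase
        exact ⟨s', hs'.trans (Finset.erase_subset _ _), hli', hx'⟩
      rcases hCne with ⟨k2, hk2s, hk2⟩
      rcases lt_or_gt_of_ne hk2 with h | h
      · refine key (fun k => -C k) ?_ ⟨k2, hk2s, by simpa using neg_pos.mpr h⟩
        simp only [neg_smul, Finset.sum_neg_distrib, hCsum, neg_zero]
      · exact key C hCsum ⟨k2, hk2s, h⟩

lemma isClosed_coneIn_of_li (g : ι → H) (s : Finset ι)
    (hs : LinearIndependent ℝ (fun k : s => g k)) : IsClosed (coneIn g s) := by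
  set f : ({k // k ∈ s} → ℝ) →ₗ[ℝ] H := Fintype.linearCombination ℝ (fun k : s => g k) with hf
  have hker : LinearMap.ker f = ⊥ := by
    rw [LinearMap.ker_eq_bot']
    intro m hm
    have := Fintype.linearIndependent_iff.mp hs m (by simpa [hf, Fintype.linearCombination_apply] using hm)
    funext k; exact this k
  have hemb := LinearMap.isClosedEmbedding_of_injective (f := f) hker
  have hset : coneIn g s = f '' {l : {k // k ∈ s} → ℝ | ∀ k, 0 ≤ l k} := by
    ext x
    constructor
    · rintro ⟨l, hl, rfl⟩
      refine ⟨fun k => l k, fun k => hl k, ?_⟩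
      simp [hf, Fintype.linearCombination_apply]
      rw [← Finset.sum_attach s (fun k => l k • g k)]
    · rintro ⟨m, hm, rfl⟩
      refine ⟨fun k => if h : k ∈ s then m ⟨k, h⟩ else 0, fun k => by
        by_cases h : k ∈ s <;> simp [h, hm _], ?_⟩
      have heq : ∑ k ∈ s, (if h : k ∈ s then m ⟨k, h⟩ else 0) • g k
          = ∑ k ∈ s.attach, m k • g (k : ι) := by
        rw [← Finset.sum_attach s (fun k => (if h : k ∈ s then m ⟨k, h⟩ else 0) • g k)]
        exact Finset.sum_congr rfl fun k _ => by simp [k.2]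
      rw [heq]
      simp [hf, Fintype.linearCombination_apply]
  have hclosed : IsClosed {l : {k // k ∈ s} → ℝ | ∀ k, 0 ≤ l k} := by
    have h2 : {l : {k // k ∈ s} → ℝ | ∀ k, 0 ≤ l k} = ⋂ k, {l | 0 ≤ l k} := by
      ext; simp [Set.mem_iInter]
    rw [h2]
    exact isClosed_iInter fun k => isClosed_le continuous_const (continuous_apply k)
  rw [hset]
  exact hemb.isClosedMap _ hclosed


lemma isClosed_coneIn_univ (g : ι → H) : IsClosed (coneIn g Finset.univ) := by
  classical
  have h : coneIn g (Finset.univ : Finset ι) =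
      ⋃ s : Finset ι, (if LinearIndependent ℝ (fun k : s => g k) then coneIn g s else ∅) := by
    ext x
    simp only [Set.mem_iUnion]
    constructor
    · intro hx
      obtain ⟨s', _, hli, hx'⟩ := exists_li_subset g Finset.univ x hx
      exact ⟨s', by simp [hli, hx']⟩
    · rintro ⟨s, hs⟩
      split at hs
      · exact coneIn_mono g (Finset.subset_univ s) hs
      · exact hs.elim
  rw [h]
  exact isClosed_iUnion_of_finite fun s => by
    split
    · exact isClosed_coneIn_of_li g s ‹_›
    · exact isClosed_empty

open scoped InnerProductSpace in
lemma cone_separation (g : ι → H) (b : H) (hb : b ∉ coneIn g Finset.univ) :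
    ∃ y : H, (∀ k, 0 ≤ ⟪g k, y⟫_ℝ) ∧ ⟪y, b⟫_ℝ < 0 := by
  classical
  set K : ConvexCone ℝ H :=
    { carrier := coneIn g Finset.univ
      smul_mem' := by
        rintro c hc x ⟨l, hl, rfl⟩
        exact ⟨fun k => c * l k, fun k => mul_nonneg hc.le (hl k), by
          rw [Finset.smul_sum]; exact Finset.sum_congr rfl fun k _ => by rw [mul_smul]⟩
      add_mem' := by
        rintro x ⟨l, hl, rfl⟩ y ⟨m, hm, rfl⟩
        exact ⟨fun k => l k + m k, fun k => add_nonneg (hl k) (hm k), by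
          rw [← Finset.sum_add_distrib]; exact Finset.sum_congr rfl fun k _ => (add_smul _ _ _)⟩ }
  have hne : (K : Set H).Nonempty := ⟨0, ⟨fun _ => 0, fun _ => le_refl 0, by simp⟩⟩
  have hcl : IsClosed (K : Set H) := isClosed_coneIn_univ g
  let KP : ProperCone ℝ H :=
    { carrier := coneIn g Finset.univ
      add_mem' := fun hx hy => K.add_mem hx hy
      zero_mem' := ⟨fun _ => 0, fun _ => le_refl 0, by simp⟩
      smul_mem' := by
        rintro c x ⟨l, hl, rfl⟩
        exact ⟨fun k => (c : ℝ) * l k, fun k => mul_nonneg c.2 (hl k), by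
          rw [Finset.smul_sum]; exact Finset.sum_congr rfl fun k _ => by rw [mul_smul]; rfl⟩
      isClosed' := hcl }
  obtain ⟨y, hy1, hy2⟩ := ProperCone.hyperplane_separation' KP (x₀ := b) hb
  refine ⟨y, fun k => ?_, by rwa [real_inner_comm] at hy2⟩
  refine hy1 (g k) ⟨fun j => if j = k then 1 else 0, fun j => by positivity, ?_⟩
  simp [ite_smul]

end Cone

lemma piLp_sum_apply {ι κ : Type*} [Fintype κ] (s : Finset ι)
    (f : ι → EuclideanSpace ℝ κ) (o : κ) :
    (∑ k ∈ s, f k) o = ∑ k ∈ s, f k o := by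
  classical
  induction s using Finset.induction with
  | empty => rfl
  | insert _ _ h ih => rw [Finset.sum_insert h, Finset.sum_insert h, PiLp.add_apply, ih]

open scoped InnerProductSpace

/-- If `δ*` is feasible and maximizes the economic surplus over the feasible
polytope, then there exist prices `π` such that the price conditions hold for `(δ*, π)`. -/
theorem surplus_maximal_implies_price_conditions
    {I T : Type*} [Fintype I] [Fintype T]
    (Q p : I → T → ℤ) (δbar : I → ℕ)
    (δstar : I → ℝ)
    (hclear : ∀ t, ∑ i, (Q i t : ℝ) * δstar i = 0)
    (hbnd : ∀ i, 0 ≤ δstar i ∧ δstar i ≤ (δbar i : ℝ))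
    (hmax : ∀ δ : I → ℝ,
        (∀ t, ∑ i, (Q i t : ℝ) * δ i = 0) →
        (∀ i, 0 ≤ δ i ∧ δ i ≤ (δbar i : ℝ)) →
        ∑ i, δ i * ∑ t, (p i t : ℝ) * (Q i t : ℝ)
          ≤ ∑ i, δstar i * ∑ t, (p i t : ℝ) * (Q i t : ℝ)) :
    ∃ π : T → ℝ, ∀ i : I,
      (0 < δstar i → 0 ≤ ∑ t, ((p i t : ℝ) - π t) * (Q i t : ℝ)) ∧
      (δstar i < (δbar i : ℝ) → ∑ t, ((p i t : ℝ) - π t) * (Q i t : ℝ) ≤ 0) := by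
  classical
  set c : I → ℝ := fun i => ∑ t, (p i t : ℝ) * (Q i t : ℝ) with hc
  set A : (I ⊕ I) → T → ℝ := Sum.elim
      (fun i t => if 0 < δstar i then (Q i t : ℝ) else 0)
      (fun i t => if δstar i < (δbar i : ℝ) then -(Q i t : ℝ) else 0) with hA
  set bb : (I ⊕ I) → ℝ := Sum.elim
      (fun i => if 0 < δstar i then c i else 0)
      (fun i => if δstar i < (δbar i : ℝ) then -(c i) else 0) with hbb
  set g : ((I ⊕ I) ⊕ Unit) → EuclideanSpace ℝ (Option T) := fun k =>
    WithLp.toLp 2 (Sum.elim (fun j => (fun o => Option.elim o (bb j) (A j) : Option T → ℝ))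
      (fun _ => (fun o => Option.elim o 1 (fun _ => 0) : Option T → ℝ)) k) with hg
  set b0 : EuclideanSpace ℝ (Option T) :=
    WithLp.toLp 2 (fun o => Option.elim o (-1) (fun _ => 0) : Option T → ℝ) with hb0
  by_cases hmem : b0 ∈ coneIn g Finset.univ
  · -- leads to a contradiction with maximality
    exfalso
    obtain ⟨l, hl, hsum⟩ := hmem
    have hcoord : ∀ o : Option T, (∑ k, l k * g k o) = b0 o := by
      intro o
      have h1 := congrArg (fun x => x o) hsum
      rw [piLp_sum_apply] at h1
      simpa [PiLp.smul_apply, smul_eq_mul] using h1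
    set u : I → ℝ := fun i => if 0 < δstar i then l (.inl (.inl i)) else 0 with hu
    set v : I → ℝ := fun i => if δstar i < (δbar i : ℝ) then l (.inl (.inr i)) else 0 with hv
    set d : I → ℝ := fun i => v i - u i with hd
    have hQd : ∀ t, ∑ i, d i * (Q i t : ℝ) = 0 := by
      intro t
      have h1 := hcoord (some t)
      rw [Fintype.sum_sum_type] at h1
      simp only [hg, Sum.elim_inl, Sum.elim_inr, Option.elim] at h1
      rw [Fintype.sum_sum_type] at h1
      simp only [hA, hb0, Sum.elim_inl, Sum.elim_inr, Option.elim, mul_zero,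
        Finset.sum_const_zero, add_zero] at h1
      have h2 : ∑ i, l (.inl (.inl i)) * (if 0 < δstar i then (Q i t : ℝ) else 0)
          = ∑ i, u i * (Q i t : ℝ) := by
        refine Finset.sum_congr rfl fun i _ => ?_
        by_cases h : 0 < δstar i <;> simp [hu, h]
      have h3 : ∑ i, l (.inl (.inr i)) * (if δstar i < (δbar i : ℝ) then -(Q i t : ℝ) else 0)
          = -∑ i, v i * (Q i t : ℝ) := by
        rw [← Finset.sum_neg_distrib]
        refine Finset.sum_congr rfl fun i _ => ?_
        by_cases h : δstar i < (δbar i : ℝ) <;> simp [hv, h]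
      rw [h2, h3] at h1
      have : ∑ i, d i * (Q i t : ℝ) = ∑ i, v i * (Q i t : ℝ) - ∑ i, u i * (Q i t : ℝ) := by
        rw [← Finset.sum_sub_distrib]
        exact Finset.sum_congr rfl fun i _ => by rw [hd]; ring
      rw [this]
      linarith
    have hdc : 1 ≤ ∑ i, d i * c i := by
      have h1 := hcoord none
      rw [Fintype.sum_sum_type] at h1
      simp only [hg, Sum.elim_inl, Sum.elim_inr, Option.elim] at h1
      rw [Fintype.sum_sum_type] at h1
      simp only [hbb, hb0, Sum.elim_inl, Sum.elim_inr, Option.elim, mul_one] at h1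
      have h2 : ∑ i, l (.inl (.inl i)) * (if 0 < δstar i then c i else 0)
          = ∑ i, u i * c i := by
        refine Finset.sum_congr rfl fun i _ => ?_
        by_cases h : 0 < δstar i <;> simp [hu, h]
      have h3 : ∑ i, l (.inl (.inr i)) * (if δstar i < (δbar i : ℝ) then -(c i) else 0)
          = -∑ i, v i * c i := by
        rw [← Finset.sum_neg_distrib]
        refine Finset.sum_congr rfl fun i _ => ?_
        by_cases h : δstar i < (δbar i : ℝ) <;> simp [hv, h]
      rw [h2, h3] at h1
      have h4 : ∑ i, d i * c i = ∑ i, v i * c i - ∑ i, u i * c i := by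
        rw [← Finset.sum_sub_distrib]
        exact Finset.sum_congr rfl fun i _ => by rw [hd]; ring
      have h5 : (0:ℝ) ≤ ∑ x : Unit, l (.inr x) := by
        exact Finset.sum_nonneg fun x _ => hl _
      rw [h4]
      linarith
    rcases isEmpty_or_nonempty I with hI | hI
    · simp [Finset.univ_eq_empty] at hdc; linarith
    · set E : I → ℝ := fun i =>
        if 0 < d i then ((δbar i : ℝ) - δstar i) / d i
        else if d i < 0 then δstar i / (-(d i)) else 1 with hE
      have hdd : ∀ i, d i = v i - u i := fun i => by rw [hd]
      have hvpos : ∀ i, 0 < d i → δstar i < (δbar i : ℝ) := by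
        intro i hdi
        by_contra h
        have hvi : v i = 0 := by simp [hv, h]
        have hui : 0 ≤ u i := by
          by_cases h2 : 0 < δstar i <;> simp [hu, h2, hl _]
        rw [hdd i, hvi] at hdi
        linarith
      have hupos : ∀ i, d i < 0 → 0 < δstar i := by
        intro i hdi
        by_contra h
        have hui : u i = 0 := by simp [hu, h]
        have hvi : 0 ≤ v i := by
          by_cases h2 : δstar i < (δbar i : ℝ) <;> simp [hv, h2, hl _]
        rw [hdd i, hui] at hdi
        linarith
      have hEpos : ∀ i, 0 < E i := by
        intro i
        simp only [hE]
        rcases lt_trichotomy (d i) 0 with h | h | h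
        · rw [if_neg (by linarith), if_pos h]
          exact div_pos (hupos i h) (by linarith)
        · rw [if_neg (by simp [h]), if_neg (by simp [h])]; norm_num
        · rw [if_pos h]
          exact div_pos (by linarith [hvpos i h]) h
      set ε : ℝ := min 1 (Finset.univ.inf' (Finset.univ_nonempty) E) with hε
      have hεpos : 0 < ε := by
        refine lt_min one_pos ?_
        rw [Finset.lt_inf'_iff]
        exact fun i _ => hEpos i
      have hεE : ∀ i, ε ≤ E i := fun i =>
        (min_le_right _ _).trans (Finset.inf'_le _ (Finset.mem_univ i))
      set δ : I → ℝ := fun i => δstar i + ε * d i with hδ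
      have hclear' : ∀ t, ∑ i, (Q i t : ℝ) * δ i = 0 := by
        intro t
        calc ∑ i, (Q i t : ℝ) * δ i
            = ∑ i, ((Q i t : ℝ) * δstar i + ε * (d i * (Q i t : ℝ))) :=
              Finset.sum_congr rfl fun i _ => by rw [hδ]; ring
          _ = ∑ i, (Q i t : ℝ) * δstar i + ε * ∑ i, d i * (Q i t : ℝ) := by
              rw [Finset.sum_add_distrib, Finset.mul_sum]
          _ = 0 := by rw [hclear t, hQd t]; ring
      have hbnd' : ∀ i, 0 ≤ δ i ∧ δ i ≤ (δbar i : ℝ) := by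
        intro i
        simp only [hδ]
        rcases lt_trichotomy (d i) 0 with h | h | h
        · have h1 : ε ≤ δstar i / (-(d i)) := by
            have := hεE i
            simp only [hE] at this; rwa [if_neg (by linarith), if_pos h] at this
          rw [le_div_iff₀ (by linarith)] at h1
          constructor
          · nlinarith
          · nlinarith [(hbnd i).2, mul_pos hεpos (neg_pos.mpr h)]
        · simp only [h, mul_zero, add_zero]; exact hbnd i
        · have h1 : ε ≤ ((δbar i : ℝ) - δstar i) / d i := by
            have := hεE i
            simp only [hE] at this; rwa [if_pos h] at this
          rw [le_div_iff₀ h] at h1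
          constructor
          · nlinarith [(hbnd i).1, mul_pos hεpos h]
          · nlinarith
      have hsurplus := hmax δ hclear' hbnd'
      have hsplit : ∑ i, δ i * c i = ∑ i, δstar i * c i + ε * ∑ i, d i * c i := by
        calc ∑ i, δ i * c i = ∑ i, (δstar i * c i + ε * (d i * c i)) :=
              Finset.sum_congr rfl fun i _ => by rw [hδ]; ring
          _ = _ := by rw [Finset.sum_add_distrib, Finset.mul_sum]
      rw [hsplit] at hsurplus
      nlinarith [mul_pos hεpos (lt_of_lt_of_le one_pos hdc)]
  · -- separation gives the prices
    obtain ⟨y, hy1, hy2⟩ := cone_separation g b0 hmem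
    have hr : 0 < y none := by
      have : ⟪y, b0⟫_ℝ = -(y none) := by
        simp [hb0, PiLp.inner_apply, RCLike.inner_apply, Fintype.sum_option]
      rw [this] at hy2
      linarith
    set r : ℝ := y none with hrdef
    have hrow : ∀ j : I ⊕ I, 0 ≤ bb j * r + ∑ t, A j t * y (some t) := by
      intro j
      have h1 := hy1 (Sum.inl j)
      rw [show ⟪g (Sum.inl j), y⟫_ℝ = bb j * r + ∑ t, A j t * y (some t) from ?_] at h1
      · exact h1
      · simp [hg, PiLp.inner_apply, RCLike.inner_apply, Fintype.sum_option]
        rw [hrdef, mul_comm]; congr 1; exact Finset.sum_congr rfl fun _ _ => mul_comm _ _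
    refine ⟨fun t => -(y (some t)) / r, fun i => ?_⟩
    have h2 : ∑ t, ((p i t : ℝ) - (-(y (some t)) / r)) * (Q i t : ℝ)
        = ((∑ t, (p i t : ℝ) * (Q i t : ℝ)) * r + ∑ t, (Q i t : ℝ) * y (some t)) / r := by
      rw [Finset.sum_mul, ← Finset.sum_add_distrib, Finset.sum_div]
      refine Finset.sum_congr rfl fun t _ => ?_
      field_simp
      ring
    constructor
    · intro hpos
      have h1 := hrow (Sum.inl i)
      simp only [hA, hbb, Sum.elim_inl, if_pos hpos] at h1
      simp only [hc] at h1
      rw [h2]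
      exact div_nonneg (by linarith) hr.le
    · intro hlt
      have h1 := hrow (Sum.inr i)
      simp only [hA, hbb, Sum.elim_inr, if_pos hlt] at h1
      have h4 : ∑ t, -(Q i t : ℝ) * y (some t) = -∑ t, (Q i t : ℝ) * y (some t) := by
        rw [← Finset.sum_neg_distrib]
        exact Finset.sum_congr rfl fun t _ => by ring
      rw [h4] at h1
      simp only [hc] at h1
      rw [h2]
      exact div_nonpos_of_nonpos_of_nonneg (by linarith) hr.le
end

section
/- Assume that for every i ∈ I the quantity vector Q i takes values in {−1, 0, 1}, has at most one entry equal to +1 and at most one entry equal to −1 (i.e., the orders form the arcs of a directed network on the contracts). Then the maximum of the surplus S over P is attained at an integral point: there exists δ* ∈ P with δ*ᵢ ∈ ℤ for all i ∈ I and S(δ*) ≥ S(δ) for all δ ∈ P. -/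
open Finset

namespace SurplusAux

variable {I T : Type*} [Fintype I] [Fintype T]

/-- Key lemma: if every "node" `t` touches either zero or at least two "arcs" of `F`,
then the columns `{Q i : i ∈ F}` admit a nontrivial linear dependency. -/
lemma exists_dependency (Q : I → T → ℤ)
    (hval : ∀ i t, Q i t = -1 ∨ Q i t = 0 ∨ Q i t = 1)
    (hpos : ∀ i t t', Q i t = 1 → Q i t' = 1 → t = t')
    (hneg : ∀ i t t', Q i t = -1 → Q i t' = -1 → t = t')
    (F : Finset I) (hne : F.Nonempty)
    (hdeg : ∀ t, (F.filter fun i => Q i t ≠ 0).card ≠ 1) :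
    ∃ v : I → ℝ, (∃ i, v i ≠ 0) ∧ (∀ i ∉ F, v i = 0) ∧
      ∀ t, ∑ i, (Q i t : ℝ) * v i = 0 := by
  classical
  by_cases hz : ∃ i0 ∈ F, ∀ t, Q i0 t = 0
  · obtain ⟨i0, hi0F, hi0⟩ := hz
    refine ⟨fun i => if i = i0 then 1 else 0, ⟨i0, by simp⟩,
      fun i hi => by
        have : i ≠ i0 := fun h => hi (h ▸ hi0F)
        simp [this], fun t => ?_⟩
    have : ∀ i, (Q i t : ℝ) * (if i = i0 then (1:ℝ) else 0) =
        if i = i0 then (Q i0 t : ℝ) else 0 := by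
      intro i; by_cases h : i = i0 <;> simp [h]
    rw [Finset.sum_congr rfl fun i _ => this i]
    simp [hi0 t]
  · push_neg at hz
    set N : Finset T := univ.filter fun t => ∃ i ∈ F, Q i t ≠ 0 with hN
    have hdeg2 : ∀ t ∈ N, 2 ≤ (F.filter fun i => Q i t ≠ 0).card := by
      intro t ht
      rw [hN, mem_filter] at ht
      obtain ⟨i, hiF, hQ⟩ := ht.2
      have h1 : 0 < (F.filter fun i => Q i t ≠ 0).card :=
        card_pos.mpr ⟨i, mem_filter.mpr ⟨hiF, hQ⟩⟩
      have := hdeg t; omega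
    have hcount : ∑ t ∈ N, (F.filter fun i => Q i t ≠ 0).card
        = ∑ i ∈ F, (N.filter fun t => Q i t ≠ 0).card := by
      simp_rw [Finset.card_filter]
      exact Finset.sum_comm
    have hcard1 : ∀ i, (univ.filter fun t => Q i t = 1).card ≤ 1 :=
      fun i => Finset.card_le_one.mpr (by
        intro a ha b hb; rw [mem_filter] at ha hb; exact hpos i a b ha.2 hb.2)
    have hcardm1 : ∀ i, (univ.filter fun t => Q i t = -1).card ≤ 1 :=
      fun i => Finset.card_le_one.mpr (by
        intro a ha b hb; rw [mem_filter] at ha hb; exact hneg i a b ha.2 hb.2)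
    have hdi : ∀ i, (N.filter fun t => Q i t ≠ 0).card ≤ 2 := by
      intro i
      have hsub : (N.filter fun t => Q i t ≠ 0) ⊆
          (univ.filter fun t => Q i t = 1) ∪ (univ.filter fun t => Q i t = -1) := by
        intro t ht
        rw [mem_filter] at ht
        rcases hval i t with h | h | h
        · exact mem_union_right _ (mem_filter.mpr ⟨mem_univ _, h⟩)
        · exact absurd h ht.2
        · exact mem_union_left _ (mem_filter.mpr ⟨mem_univ _, h⟩)
      calc (N.filter fun t => Q i t ≠ 0).card
          ≤ _ := card_le_card hsub
        _ ≤ _ + _ := card_union_le _ _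
        _ ≤ 2 := by have := hcard1 i; have := hcardm1 i; omega
    have h2N : 2 * N.card ≤ ∑ t ∈ N, (F.filter fun i => Q i t ≠ 0).card := by
      calc 2 * N.card = ∑ _t ∈ N, 2 := by rw [Finset.sum_const]; ring
        _ ≤ _ := Finset.sum_le_sum hdeg2
    -- common goal: find a low-dimensional subspace containing all columns
    obtain ⟨W, hW1, hW2⟩ : ∃ W : Submodule ℝ (↥N → ℝ),
        (∀ i ∈ F, (fun t : ↥N => (Q i t.1 : ℝ)) ∈ W) ∧ Module.finrank ℝ ↥W < F.card := by
      by_cases hA : ∃ i0 ∈ F, (∀ t, Q i0 t ≠ 1) ∨ (∀ t, Q i0 t ≠ -1)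
      · -- some column with at most one nonzero entry : N.card < F.card
        obtain ⟨i0, hi0F, hi0⟩ := hA
        have hd1 : (N.filter fun t => Q i0 t ≠ 0).card ≤ 1 := by
          rcases hi0 with h | h
          · calc (N.filter fun t => Q i0 t ≠ 0).card
                ≤ (univ.filter fun t => Q i0 t = -1).card := by
                  apply card_le_card; intro t ht; rw [mem_filter] at ht ⊢
                  rcases hval i0 t with h' | h' | h'
                  · exact ⟨mem_univ _, h'⟩
                  · exact absurd h' ht.2
                  · exact absurd h' (h t)
              _ ≤ 1 := hcardm1 i0
          · calc (N.filter fun t => Q i0 t ≠ 0).card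
                ≤ (univ.filter fun t => Q i0 t = 1).card := by
                  apply card_le_card; intro t ht; rw [mem_filter] at ht ⊢
                  rcases hval i0 t with h' | h' | h'
                  · exact absurd h' (h t)
                  · exact absurd h' ht.2
                  · exact ⟨mem_univ _, h'⟩
              _ ≤ 1 := hcard1 i0
        have hsum_le : ∑ i ∈ F, (N.filter fun t => Q i t ≠ 0).card
            ≤ 1 + 2 * (F.card - 1) := by
          rw [← Finset.add_sum_erase _ _ hi0F]
          have h1 : ∑ i ∈ F.erase i0, (N.filter fun t => Q i t ≠ 0).card
              ≤ ∑ _i ∈ F.erase i0, 2 := Finset.sum_le_sum fun i _ => hdi i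
          rw [Finset.sum_const, smul_eq_mul, card_erase_of_mem hi0F] at h1
          omega
        have hFpos : 1 ≤ F.card := card_pos.mpr hne
        have hNF : N.card < F.card := by omega
        refine ⟨⊤, fun i _ => Submodule.mem_top, ?_⟩
        rw [finrank_top, Module.finrank_pi, Fintype.card_coe]
        exact hNF
      · -- every column has exactly one +1 and one -1
        push_neg at hA
        have hNF : N.card ≤ F.card := by
          have hsum_le : ∑ i ∈ F, (N.filter fun t => Q i t ≠ 0).card
              ≤ 2 * F.card := by
            calc _ ≤ ∑ _i ∈ F, 2 := Finset.sum_le_sum fun i _ => hdi i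
              _ = 2 * F.card := by rw [Finset.sum_const]; ring
          omega
        have hcolsum : ∀ i ∈ F, ∑ t, Q i t = 0 := by
          intro i hiF
          obtain ⟨⟨a, ha⟩, ⟨b, hb⟩⟩ := hA i hiF
          have hab : a ≠ b := fun h => by rw [h, hb] at ha; omega
          have hpt : ∀ t, Q i t =
              (if t = a then (1:ℤ) else 0) + (if t = b then (-1:ℤ) else 0) := by
            intro t
            by_cases h1 : t = a
            · subst h1; rw [if_pos rfl, if_neg hab, ha]; ring
            · by_cases h2 : t = b
              · subst h2; rw [if_neg h1, if_pos rfl, hb]; ring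
              · rw [if_neg h1, if_neg h2]
                rcases hval i t with h | h | h
                · exact absurd (hneg i t b h hb) h2
                · omega
                · exact absurd (hpos i t a h ha) h1
          rw [Finset.sum_congr rfl fun t _ => hpt t, Finset.sum_add_distrib]
          simp
        have hNne : N.Nonempty := by
          obtain ⟨i, hiF⟩ := hne
          obtain ⟨⟨a, ha⟩, _⟩ := hA i hiF
          exact ⟨a, by rw [hN, mem_filter]; exact ⟨mem_univ _, i, hiF, by omega⟩⟩
        set φ : (↥N → ℝ) →ₗ[ℝ] ℝ := ∑ t : ↥N, LinearMap.proj t with hφ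
        have hφ_apply : ∀ x : ↥N → ℝ, φ x = ∑ t : ↥N, x t := by
          intro x; rw [hφ]; simp [LinearMap.sum_apply]
        have hφ_surj : Function.Surjective φ := by
          intro r
          refine ⟨fun _ => r / N.card, ?_⟩
          rw [hφ_apply, Finset.sum_const, Finset.card_univ, Fintype.card_coe,
            nsmul_eq_mul]
          have : (N.card : ℝ) ≠ 0 := by
            simp [Finset.card_eq_zero, hNne.ne_empty, Nat.cast_eq_zero]
          field_simp
        have hrange : Module.finrank ℝ ↥(LinearMap.range φ) = 1 := by
          rw [LinearMap.range_eq_top.mpr hφ_surj, finrank_top, Module.finrank_self]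
        have hker := LinearMap.finrank_range_add_finrank_ker φ
        rw [hrange, Module.finrank_pi, Fintype.card_coe] at hker
        refine ⟨LinearMap.ker φ, ?_, ?_⟩
        · intro i hiF
          rw [LinearMap.mem_ker, hφ_apply]
          have h1 : ∑ t ∈ N, Q i t = ∑ t, Q i t :=
            Finset.sum_subset (subset_univ N) (fun t _ ht => by
              by_contra h
              exact ht (by rw [hN, mem_filter]; exact ⟨mem_univ _, i, hiF, h⟩))
          have h2 : ∑ t ∈ N.attach, (Q i t.1 : ℝ) = ((∑ t ∈ N, Q i t : ℤ) : ℝ) := by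
            push_cast
            exact Finset.sum_attach N fun t => (Q i t : ℝ)
          calc ∑ t : ↥N, (Q i t.1 : ℝ) = ((∑ t ∈ N, Q i t : ℤ) : ℝ) := h2
            _ = 0 := by rw [h1, hcolsum i hiF]; simp
        · have hFpos : 1 ≤ F.card := card_pos.mpr hne
          omega
    -- extract a dependency among the columns, viewed inside W
    set f : ↥F → ↥W := fun i => ⟨fun t => (Q i.1 t.1 : ℝ), hW1 i.1 i.2⟩ with hf
    have hnotli : ¬ LinearIndependent ℝ f := by
      intro hli
      have := hli.fintype_card_le_finrank
      rw [Fintype.card_coe] at this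
      omega
    obtain ⟨g, hg0, i₀, hgi⟩ := Fintype.not_linearIndependent_iff.mp hnotli
    set v : I → ℝ := fun i => if h : i ∈ F then g ⟨i, h⟩ else 0 with hv
    have hvF : ∀ i ∉ F, v i = 0 := fun i hi => dif_neg hi
    refine ⟨v, ⟨i₀.1, by rw [hv]; simpa [i₀.2] using hgi⟩, hvF, ?_⟩
    intro t
    have hstep1 : ∑ i, (Q i t : ℝ) * v i = ∑ i ∈ F, (Q i t : ℝ) * v i :=
      (Finset.sum_subset (subset_univ F) (fun i _ hi => by rw [hvF i hi, mul_zero])).symm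
    have hstep2 : ∑ i ∈ F, (Q i t : ℝ) * v i = ∑ i ∈ F.attach, (Q i.1 t : ℝ) * g i := by
      rw [← Finset.sum_attach F fun i => (Q i t : ℝ) * v i]
      refine Finset.sum_congr rfl fun i _ => ?_
      have hvi : v i.1 = g i := by simp only [hv, dif_pos i.2, Subtype.coe_eta]
      rw [hvi]
    rw [hstep1, hstep2]
    by_cases ht : t ∈ N
    · have := congrArg (fun x : ↥W => (x : ↥N → ℝ) ⟨t, ht⟩) hg0
      simp only [AddSubmonoidClass.coe_finset_sum, Finset.sum_apply, SetLike.val_smul,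
        Pi.smul_apply, smul_eq_mul, ZeroMemClass.coe_zero, Pi.zero_apply, hf] at this
      rw [← this]
      exact Finset.sum_congr rfl fun i _ => mul_comm _ _
    · refine Finset.sum_eq_zero fun i _ => ?_
      have hQ0 : Q i.1 t = 0 := by
        by_contra h
        exact ht (by rw [hN, mem_filter]; exact ⟨mem_univ _, i.1, i.2, h⟩)
      rw [hQ0]; simp

/-- The set of coordinates where `δ` is not an integer. -/
noncomputable def Frac (δ : I → ℝ) : Finset I :=
  @Finset.filter _ (fun i => ¬∃ z : ℤ, δ i = (z : ℝ)) (Classical.decPred _) Finset.univ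

lemma mem_Frac {δ : I → ℝ} {i : I} : i ∈ Frac δ ↔ ¬∃ z : ℤ, δ i = (z : ℝ) := by
  rw [Frac, @Finset.mem_filter _ _ (Classical.decPred _)]
  simp

lemma deg_ne_one (Q : I → T → ℤ)
    (hval : ∀ i t, Q i t = -1 ∨ Q i t = 0 ∨ Q i t = 1)
    (δ : I → ℝ) (hfeas : ∀ t, ∑ i, (Q i t : ℝ) * δ i = 0) (t : T) :
    ((Frac δ).filter fun i => Q i t ≠ 0).card ≠ 1 := by
  classical
  intro hcard
  obtain ⟨i0, hi0⟩ := Finset.card_eq_one.mp hcard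
  have hi0mem : i0 ∈ (Frac δ).filter fun i => Q i t ≠ 0 := hi0 ▸ mem_singleton_self i0
  rw [mem_filter] at hi0mem
  obtain ⟨hi0F, hi0Q⟩ := hi0mem
  have hterm : ∀ i ∈ Finset.univ.erase i0, ∃ z : ℤ, (Q i t : ℝ) * δ i = (z : ℝ) := by
    intro i hi
    have hne : i ≠ i0 := (mem_erase.mp hi).1
    by_cases hQ : Q i t = 0
    · exact ⟨0, by rw [hQ]; simp⟩
    · have hiF : i ∉ Frac δ := by
        intro h
        have : i ∈ (Frac δ).filter fun i => Q i t ≠ 0 := mem_filter.mpr ⟨h, hQ⟩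
        rw [hi0, mem_singleton] at this
        exact hne this
      rw [mem_Frac, not_not] at hiF
      obtain ⟨z, hz⟩ := hiF
      exact ⟨Q i t * z, by rw [hz]; push_cast; ring⟩
  set w : I → ℤ := fun i => if h : ∃ z : ℤ, (Q i t : ℝ) * δ i = (z : ℝ) then h.choose else 0
    with hw
  have hwspec : ∀ i ∈ Finset.univ.erase i0, (Q i t : ℝ) * δ i = (w i : ℝ) := by
    intro i hi
    have h := hterm i hi
    rw [hw]
    simp only [dif_pos h]
    exact h.choose_spec
  have hsum : ∑ i ∈ Finset.univ.erase i0, (Q i t : ℝ) * δ i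
      = ((∑ i ∈ Finset.univ.erase i0, w i : ℤ) : ℝ) := by
    push_cast
    exact Finset.sum_congr rfl hwspec
  have h0 := hfeas t
  rw [← Finset.add_sum_erase _ _ (mem_univ i0), hsum] at h0
  set z : ℤ := ∑ i ∈ Finset.univ.erase i0, w i with hz
  have hkey : (Q i0 t : ℝ) * δ i0 = ((-z : ℤ) : ℝ) := by push_cast; linarith
  have hQv : Q i0 t = 1 ∨ Q i0 t = -1 := by
    rcases hval i0 t with h | h | h
    · exact Or.inr h
    · exact absurd h hi0Q
    · exact Or.inl h
  apply mem_Frac.mp hi0F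
  rcases hQv with h | h
  · rw [h] at hkey
    exact ⟨-z, by push_cast at hkey ⊢; linarith⟩
  · rw [h] at hkey
    exact ⟨z, by push_cast at hkey ⊢; linarith⟩

lemma step (Q p : I → T → ℤ) (δbar : I → ℕ)
    (hval : ∀ i t, Q i t = -1 ∨ Q i t = 0 ∨ Q i t = 1)
    (hpos : ∀ i t t', Q i t = 1 → Q i t' = 1 → t = t')
    (hneg : ∀ i t t', Q i t = -1 → Q i t' = -1 → t = t')
    (δ : I → ℝ)
    (h1 : ∀ t, ∑ i, (Q i t : ℝ) * δ i = 0)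
    (h2 : ∀ i, 0 ≤ δ i ∧ δ i ≤ (δbar i : ℝ))
    (hne : (Frac δ).Nonempty) :
    ∃ δ' : I → ℝ, (∀ t, ∑ i, (Q i t : ℝ) * δ' i = 0) ∧
      (∀ i, 0 ≤ δ' i ∧ δ' i ≤ (δbar i : ℝ)) ∧
      (Frac δ').card < (Frac δ).card ∧
      ∑ i, δ i * ∑ t, (p i t : ℝ) * (Q i t : ℝ)
        ≤ ∑ i, δ' i * ∑ t, (p i t : ℝ) * (Q i t : ℝ) := by
  classical
  set c : I → ℝ := fun i => ∑ t, (p i t : ℝ) * (Q i t : ℝ) with hc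
  obtain ⟨v0, hv0ne, hv0F, hv0Q⟩ := exists_dependency Q hval hpos hneg (Frac δ) hne
    (fun t => deg_ne_one Q hval δ h1 t)
  obtain ⟨v, hvne, hvF, hvQ, hvc⟩ : ∃ v : I → ℝ, (∃ i, v i ≠ 0) ∧
      (∀ i ∉ Frac δ, v i = 0) ∧ (∀ t, ∑ i, (Q i t : ℝ) * v i = 0) ∧
      0 ≤ ∑ i, v i * c i := by
    rcases le_or_gt 0 (∑ i, v0 i * c i) with h | h
    · exact ⟨v0, hv0ne, hv0F, hv0Q, h⟩
    · refine ⟨-v0, ?_, ?_, ?_, ?_⟩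
      · obtain ⟨i, hi⟩ := hv0ne; exact ⟨i, by simpa using hi⟩
      · intro i hi; simp [hv0F i hi]
      · intro t
        have : ∑ i, (Q i t : ℝ) * (-v0) i = -∑ i, (Q i t : ℝ) * v0 i := by
          rw [← Finset.sum_neg_distrib]
          exact Finset.sum_congr rfl fun i _ => by simp [mul_neg]
        rw [this, hv0Q t, neg_zero]
      · have : ∑ i, (-v0) i * c i = -∑ i, v0 i * c i := by
          rw [← Finset.sum_neg_distrib]
          exact Finset.sum_congr rfl fun i _ => by simp [neg_mul]
        rw [this]
        linarith
  have hfloor : ∀ i ∈ Frac δ, (⌊δ i⌋ : ℝ) < δ i := by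
    intro i hi
    rcases lt_or_eq_of_le (Int.floor_le (δ i)) with h | h
    · exact h
    · exact absurd ⟨⌊δ i⌋, h.symm⟩ (mem_Frac.mp hi)
  have hceil : ∀ i ∈ Frac δ, δ i < (⌈δ i⌉ : ℝ) := by
    intro i hi
    rcases lt_or_eq_of_le (Int.le_ceil (δ i)) with h | h
    · exact h
    · exact absurd ⟨⌈δ i⌉, h⟩ (mem_Frac.mp hi)
  set θa : I → ℝ := fun i =>
    if 0 < v i then ((⌈δ i⌉ : ℝ) - δ i) / v i else (δ i - (⌊δ i⌋ : ℝ)) / (-v i) with hθa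
  set Sv : Finset I := (Frac δ).filter fun i => v i ≠ 0 with hSv
  have hSvne : Sv.Nonempty := by
    obtain ⟨i, hi⟩ := hvne
    have hiF : i ∈ Frac δ := by by_contra h; exact hi (hvF i h)
    exact ⟨i, mem_filter.mpr ⟨hiF, hi⟩⟩
  have hθapos : ∀ i ∈ Sv, 0 < θa i := by
    intro i hi
    rw [hSv, mem_filter] at hi
    rw [hθa]
    by_cases h : 0 < v i
    · simp only [if_pos h]
      exact div_pos (by linarith [hceil i hi.1]) h
    · simp only [if_neg h]
      have hlt : v i < 0 := lt_of_le_of_ne (not_lt.mp h) hi.2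
      exact div_pos (by linarith [hfloor i hi.1]) (by linarith)
  obtain ⟨istar, histar, hmin⟩ := Sv.exists_min_image θa hSvne
  set θ : ℝ := θa istar with hθ
  have hθpos : 0 < θ := hθapos istar histar
  have hbound : ∀ i, v i ≠ 0 → (⌊δ i⌋ : ℝ) ≤ δ i + θ * v i ∧ δ i + θ * v i ≤ (⌈δ i⌉ : ℝ) := by
    intro i hvi
    have hiF : i ∈ Frac δ := by by_contra h; exact hvi (hvF i h)
    have hiSv : i ∈ Sv := mem_filter.mpr ⟨hiF, hvi⟩
    have hθle : θ ≤ θa i := hmin i hiSv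
    simp only [hθa] at hθle
    by_cases h : 0 < v i
    · rw [if_pos h] at hθle
      have hub : θ * v i ≤ (⌈δ i⌉ : ℝ) - δ i := (le_div_iff₀ h).mp hθle
      have hlb : 0 ≤ θ * v i := le_of_lt (mul_pos hθpos h)
      exact ⟨by linarith [hfloor i hiF], by linarith⟩
    · rw [if_neg h] at hθle
      have hlt : v i < 0 := lt_of_le_of_ne (not_lt.mp h) hvi
      have hub : θ * (-v i) ≤ δ i - (⌊δ i⌋ : ℝ) := (le_div_iff₀ (by linarith)).mp hθle
      have hlb : θ * v i ≤ 0 := by nlinarith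
      have hrw : θ * (-v i) = -(θ * v i) := by ring
      rw [hrw] at hub
      exact ⟨by linarith, by linarith [Int.le_ceil (δ i)]⟩
  set δ' : I → ℝ := fun i => δ i + θ * v i with hδ'
  have hconstr : ∀ t, ∑ i, (Q i t : ℝ) * δ' i = 0 := by
    intro t
    have heq : ∀ i, (Q i t : ℝ) * δ' i = (Q i t : ℝ) * δ i + θ * ((Q i t : ℝ) * v i) := by
      intro i; rw [hδ']; ring
    rw [Finset.sum_congr rfl fun i _ => heq i, Finset.sum_add_distrib, ← Finset.mul_sum,
      h1 t, hvQ t]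
    ring
  have hbounds : ∀ i, 0 ≤ δ' i ∧ δ' i ≤ (δbar i : ℝ) := by
    intro i
    by_cases hvi : v i = 0
    · have : δ' i = δ i := by rw [hδ']; simp [hvi]
      rw [this]; exact h2 i
    · obtain ⟨hlo, hhi⟩ := hbound i hvi
      obtain ⟨h0, hb⟩ := h2 i
      have hfl : (0 : ℝ) ≤ (⌊δ i⌋ : ℝ) := by exact_mod_cast Int.floor_nonneg.mpr h0
      have hcl : ((⌈δ i⌉ : ℤ) : ℝ) ≤ (δbar i : ℝ) := by
        have h' : ⌈δ i⌉ ≤ ((δbar i : ℕ) : ℤ) := Int.ceil_le.mpr (by exact_mod_cast hb)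
        exact_mod_cast h'
      constructor
      · have : δ' i = δ i + θ * v i := by rw [hδ']
        rw [this]; linarith
      · have : δ' i = δ i + θ * v i := by rw [hδ']
        rw [this]; linarith
  have histar_int : ∃ z : ℤ, δ' istar = (z : ℝ) := by
    have histar' := histar
    rw [hSv, mem_filter] at histar'
    obtain ⟨hiF, hvi⟩ := histar'
    by_cases h : 0 < v istar
    · refine ⟨⌈δ istar⌉, ?_⟩
      have hne0 : v istar ≠ 0 := hvi
      rw [hδ', hθ, hθa]
      simp only [if_pos h]
      field_simp
      ring
    · refine ⟨⌊δ istar⌋, ?_⟩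
      have hlt : v istar < 0 := lt_of_le_of_ne (not_lt.mp h) hvi
      have hne0 : v istar ≠ 0 := hvi
      have hcalc : (δ istar - (⌊δ istar⌋ : ℝ)) / (-v istar) * v istar
          = -(δ istar - (⌊δ istar⌋ : ℝ)) := by
        rw [div_neg, neg_mul, div_mul_cancel₀ _ hne0]
      rw [hδ', hθ, hθa]
      simp only [if_neg h]
      rw [hcalc]
      ring
  have hiFstar : istar ∈ Frac δ := by
    have histar' := histar
    rw [hSv, mem_filter] at histar'
    exact histar'.1
  have hsubset : Frac δ' ⊆ (Frac δ).erase istar := by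
    intro i hi
    rw [mem_erase]
    refine ⟨?_, ?_⟩
    · rintro rfl
      exact (mem_Frac.mp hi) histar_int
    · by_contra h
      have hvi : v i = 0 := hvF i h
      apply mem_Frac.mp hi
      have hint : ∃ z : ℤ, δ i = (z : ℝ) := by
        by_contra h'
        exact h (mem_Frac.mpr h')
      obtain ⟨z, hz⟩ := hint
      exact ⟨z, by rw [hδ']; simp [hvi, hz]⟩
  have hcard : (Frac δ').card < (Frac δ).card :=
    lt_of_le_of_lt (card_le_card hsubset) (card_erase_lt_of_mem hiFstar)
  have hsurp : ∑ i, δ i * c i ≤ ∑ i, δ' i * c i := by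
    have heq : ∀ i, δ' i * c i = δ i * c i + θ * (v i * c i) := by
      intro i; rw [hδ']; ring
    rw [Finset.sum_congr rfl fun i _ => heq i, Finset.sum_add_distrib, ← Finset.mul_sum]
    nlinarith
  exact ⟨δ', hconstr, hbounds, hcard, hsurp⟩

lemma round (Q p : I → T → ℤ) (δbar : I → ℕ)
    (hval : ∀ i t, Q i t = -1 ∨ Q i t = 0 ∨ Q i t = 1)
    (hpos : ∀ i t t', Q i t = 1 → Q i t' = 1 → t = t')
    (hneg : ∀ i t t', Q i t = -1 → Q i t' = -1 → t = t') :
    ∀ n (δ : I → ℝ), (Frac δ).card ≤ n →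
      (∀ t, ∑ i, (Q i t : ℝ) * δ i = 0) →
      (∀ i, 0 ≤ δ i ∧ δ i ≤ (δbar i : ℝ)) →
      ∃ δ' : I → ℝ, (∀ t, ∑ i, (Q i t : ℝ) * δ' i = 0) ∧
        (∀ i, 0 ≤ δ' i ∧ δ' i ≤ (δbar i : ℝ)) ∧
        (∀ i, ∃ z : ℤ, δ' i = (z : ℝ)) ∧
        ∑ i, δ i * ∑ t, (p i t : ℝ) * (Q i t : ℝ)
          ≤ ∑ i, δ' i * ∑ t, (p i t : ℝ) * (Q i t : ℝ) := by
  intro n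
  induction n with
  | zero =>
    intro δ hcard h1 h2
    refine ⟨δ, h1, h2, ?_, le_refl _⟩
    intro i
    have hnotF : i ∉ Frac δ := by
      intro hi
      have := card_pos.mpr ⟨i, hi⟩
      omega
    by_contra h'
    exact hnotF (mem_Frac.mpr h')
  | succ n ih =>
    intro δ hcard h1 h2
    by_cases hfe : (Frac δ).Nonempty
    · obtain ⟨δ'', hc1, hc2, hc3, hc4⟩ := step Q p δbar hval hpos hneg δ h1 h2 hfe
      obtain ⟨δ', hd1, hd2, hd3, hd4⟩ := ih δ'' (by omega) hc1 hc2
      exact ⟨δ', hd1, hd2, hd3, le_trans hc4 hd4⟩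
    · refine ⟨δ, h1, h2, ?_, le_refl _⟩
      intro i
      by_contra h'
      exact hfe ⟨i, mem_Frac.mpr h'⟩

end SurplusAux

/-- If every order's quantity vector takes values in `{-1, 0, 1}` with at most
one `+1` entry and at most one `-1` entry (network structure), then the surplus maximum
over the feasible polytope is attained at an integral point. -/
theorem surplus_max_attained_at_integral_point
    {I T : Type*} [Fintype I] [Fintype T]
    (Q p : I → T → ℤ) (δbar : I → ℕ)
    (hval : ∀ i t, Q i t = -1 ∨ Q i t = 0 ∨ Q i t = 1)
    (hpos : ∀ i t t', Q i t = 1 → Q i t' = 1 → t = t')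
    (hneg : ∀ i t t', Q i t = -1 → Q i t' = -1 → t = t') :
    ∃ δstar : I → ℝ,
      (∀ t, ∑ i, (Q i t : ℝ) * δstar i = 0) ∧
      (∀ i, 0 ≤ δstar i ∧ δstar i ≤ (δbar i : ℝ)) ∧
      (∀ i, ∃ z : ℤ, δstar i = (z : ℝ)) ∧
      (∀ δ : I → ℝ,
        (∀ t, ∑ i, (Q i t : ℝ) * δ i = 0) →
        (∀ i, 0 ≤ δ i ∧ δ i ≤ (δbar i : ℝ)) →
        ∑ i, δ i * ∑ t, (p i t : ℝ) * (Q i t : ℝ)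
          ≤ ∑ i, δstar i * ∑ t, (p i t : ℝ) * (Q i t : ℝ)) := by
  classical
  set C : Finset (I → ℤ) := Fintype.piFinset fun i => Finset.Icc 0 ((δbar i : ℤ)) with hC
  set Cf : Finset (I → ℤ) := C.filter fun f => ∀ t, ∑ i, (Q i t : ℝ) * (f i : ℝ) = 0 with hCf
  have h0 : (fun _ : I => (0 : ℤ)) ∈ Cf := by
    rw [hCf, Finset.mem_filter]
    constructor
    · rw [hC, Fintype.mem_piFinset]
      intro i
      rw [Finset.mem_Icc]
      exact ⟨le_refl _, Int.ofNat_nonneg _⟩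
    · intro t; simp
  obtain ⟨b, hbC, hbmax⟩ := Cf.exists_max_image
    (fun f => ∑ i, (f i : ℝ) * ∑ t, (p i t : ℝ) * (Q i t : ℝ)) ⟨_, h0⟩
  rw [hCf, Finset.mem_filter] at hbC
  obtain ⟨hbC1, hbC2⟩ := hbC
  rw [hC, Fintype.mem_piFinset] at hbC1
  refine ⟨fun i => (b i : ℝ), hbC2, ?_, fun i => ⟨b i, rfl⟩, ?_⟩
  · intro i
    have hIcc := hbC1 i
    rw [Finset.mem_Icc] at hIcc
    constructor
    · show (0 : ℝ) ≤ (b i : ℝ)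
      exact_mod_cast hIcc.1
    · show (b i : ℝ) ≤ (δbar i : ℝ)
      exact_mod_cast hIcc.2
  · intro δ hδ1 hδ2
    obtain ⟨δ', hd1, hd2, hd3, hd4⟩ :=
      SurplusAux.round Q p δbar hval hpos hneg (SurplusAux.Frac δ).card δ le_rfl hδ1 hδ2
    choose g hg using hd3
    have hδ'g : δ' = fun i => (g i : ℝ) := funext hg
    have hgC : g ∈ Cf := by
      rw [hCf, Finset.mem_filter]
      constructor
      · rw [hC, Fintype.mem_piFinset]
        intro i
        rw [Finset.mem_Icc]
        obtain ⟨ha, hb'⟩ := hd2 i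
        rw [hg i] at ha hb'
        exact ⟨by exact_mod_cast ha, by exact_mod_cast hb'⟩
      · intro t
        have := hd1 t
        rw [hδ'g] at this
        exact this
    have hle := hbmax g hgC
    calc ∑ i, δ i * ∑ t, (p i t : ℝ) * (Q i t : ℝ)
        ≤ ∑ i, δ' i * ∑ t, (p i t : ℝ) * (Q i t : ℝ) := hd4
      _ = ∑ i, (g i : ℝ) * ∑ t, (p i t : ℝ) * (Q i t : ℝ) := by rw [hδ'g]
      _ ≤ _ := hle
end

section
/- Assume the matrix (Q i t)_{t∈T, i∈I} is totally unimodular and set V = 1 + Σ_{i∈I} δ̄ᵢ. Then every δ* ∈ P that maximizes V·S(δ) + Vol(δ) over P also maximizes S over P, and moreover Vol(δ*) ≥ Vol(δ) for every δ ∈ P with S(δ) = S(δ*). That is, an optimal solution of the combined weighted linear program is optimal for both the surplus-maximization LP and the subsequent volume-maximization LP. -/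
/-- An integer matrix is totally unimodular if every square submatrix has determinant
`0`, `1`, or `-1`. -/
def IsTotallyUnimodularMat {m n : Type*} [Fintype m] [Fintype n]
    (A : Matrix m n ℤ) : Prop :=
  ∀ (k : ℕ) (f : Fin k → m) (g : Fin k → n),
    Function.Injective f → Function.Injective g →
      (A.submatrix f g).det = 0 ∨ (A.submatrix f g).det = 1 ∨ (A.submatrix f g).det = -1

lemma aux_extreme_integral {I T : Type*} [Fintype I] [Fintype T]
    (Q : I → T → ℤ) (δbar : I → ℕ)
    (hTU : IsTotallyUnimodularMat (Matrix.of fun (t : T) (i : I) => Q i t))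
    (x : I → ℝ)
    (hx : x ∈ Set.extremePoints ℝ
      {δ : I → ℝ | (∀ t, ∑ i, (Q i t : ℝ) * δ i = 0) ∧ ∀ i, 0 ≤ δ i ∧ δ i ≤ (δbar i : ℝ)}) :
    ∀ i, ∃ n : ℤ, x i = n := by
  classical
  obtain ⟨⟨hxc, hxb⟩, hxe⟩ := hx
  set F : Finset I := Finset.univ.filter (fun i => 0 < x i ∧ x i < (δbar i : ℝ)) with hF
  have hmem : ∀ i ∈ F, 0 < x i ∧ x i < (δbar i : ℝ) := by
    intro i hi; simpa [hF] using hi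
  have houts : ∀ i ∉ F, x i = 0 ∨ x i = (δbar i : ℝ) := by
    intro i hi
    simp only [hF, Finset.mem_filter, Finset.mem_univ, true_and, not_and_or, not_lt] at hi
    rcases hi with h | h
    · exact Or.inl (le_antisymm h (hxb i).1)
    · exact Or.inr (le_antisymm (hxb i).2 h)
  have houtZ : ∀ i ∉ F, ∃ n : ℤ, x i = n := by
    intro i hi
    rcases houts i hi with h | h
    · exact ⟨0, by simp [h]⟩
    · exact ⟨δbar i, by simp [h]⟩
  -- Step B: the columns indexed by F are linearly independent
  have hli : LinearIndependent ℝ (fun (j : F) => fun t => (Q j.1 t : ℝ)) := by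
    by_contra hnli
    obtain ⟨cc, hcc0, j₀, hj₀⟩ := Fintype.not_linearIndependent_iff.mp hnli
    set ch : I → ℝ := fun i => if h : i ∈ F then cc ⟨i, h⟩ else 0 with hch
    have hchF : ∀ j : F, ch j.1 = cc j := by
      intro j; simp only [hch, j.2, dif_pos]
    have hchO : ∀ i ∉ F, ch i = 0 := by
      intro i hi; simp only [hch, hi, dif_neg, not_false_iff]
    have hcol : ∀ t, ∑ i, (Q i t : ℝ) * ch i = 0 := by
      intro t
      have h1 : ∑ i, (Q i t : ℝ) * ch i = ∑ i ∈ F, (Q i t : ℝ) * ch i := by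
        symm
        apply Finset.sum_subset (Finset.subset_univ F)
        intro i _ hi
        rw [hchO i hi, mul_zero]
      have h2 := congrFun hcc0 t
      simp only [Finset.sum_apply, Pi.smul_apply, smul_eq_mul, Pi.zero_apply] at h2
      rw [h1, ← Finset.sum_attach F (fun i => (Q i t : ℝ) * ch i), ← h2]
      exact Finset.sum_congr rfl fun j _ => by rw [hchF]; ring
    have hFne : F.Nonempty := ⟨j₀.1, j₀.2⟩
    set gg : I → ℝ := fun i => if ch i = 0 then 1 else min (x i) ((δbar i : ℝ) - x i) / |ch i|
      with hgg
    set ε : ℝ := F.inf' hFne gg with hε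
    have hεpos : 0 < ε := by
      rw [hε, Finset.lt_inf'_iff]
      intro i hi
      simp only [hgg]
      split_ifs with h
      · norm_num
      · exact div_pos (lt_min (hmem i hi).1 (by linarith [(hmem i hi).2])) (abs_pos.mpr h)
    have hbd : ∀ i, ε * |ch i| ≤ min (x i) ((δbar i : ℝ) - x i) ∨ ch i = 0 := by
      intro i
      by_cases h : ch i = 0
      · exact Or.inr h
      · left
        have hiF : i ∈ F := by
          by_contra hiF; exact h (hchO i hiF)
        have h1 : ε ≤ gg i := Finset.inf'_le _ hiF
        simp only [hgg] at h1
        simp only [h, if_false] at h1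
        calc ε * |ch i| ≤ (min (x i) ((δbar i : ℝ) - x i) / |ch i|) * |ch i| :=
              mul_le_mul_of_nonneg_right h1 (abs_nonneg _)
          _ = min (x i) ((δbar i : ℝ) - x i) := div_mul_cancel₀ _ (abs_ne_zero.mpr h)
    have hptP : ∀ s : ℝ, |s| = 1 → (fun i => x i + s * ε * ch i) ∈
        {δ : I → ℝ | (∀ t, ∑ i, (Q i t : ℝ) * δ i = 0) ∧ ∀ i, 0 ≤ δ i ∧ δ i ≤ (δbar i : ℝ)} := by
      intro s hs
      constructor
      · intro t
        have : ∑ i, (Q i t : ℝ) * (x i + s * ε * ch i)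
            = (∑ i, (Q i t : ℝ) * x i) + s * ε * ∑ i, (Q i t : ℝ) * ch i := by
          rw [Finset.mul_sum, ← Finset.sum_add_distrib]
          exact Finset.sum_congr rfl fun i _ => by ring
        rw [this, hxc t, hcol t]
        ring
      · intro i
        have habs : |s * ε * ch i| = ε * |ch i| := by
          rw [abs_mul, abs_mul, hs, abs_of_pos hεpos]; ring
        rcases hbd i with h | h
        · have h1 : s * ε * ch i ≤ ε * |ch i| := habs ▸ le_abs_self _
          have h2 : -(ε * |ch i|) ≤ s * ε * ch i := habs ▸ neg_abs_le _
          have h3 : min (x i) ((δbar i : ℝ) - x i) ≤ x i := min_le_left _ _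
          have h4 : min (x i) ((δbar i : ℝ) - x i) ≤ (δbar i : ℝ) - x i := min_le_right _ _
          constructor
          · show (0:ℝ) ≤ x i + s * ε * ch i
            nlinarith
          · show x i + s * ε * ch i ≤ (δbar i : ℝ)
            nlinarith
        · show (0:ℝ) ≤ x i + s * ε * ch i ∧ x i + s * ε * ch i ≤ (δbar i : ℝ)
          rw [h, mul_zero, add_zero]
          exact hxb i
    have h1 := hptP 1 (by norm_num)
    have h2 := hptP (-1) (by norm_num)
    have hseg : x ∈ openSegment ℝ (fun i => x i + 1 * ε * ch i) (fun i => x i + (-1) * ε * ch i) := by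
      refine ⟨1/2, 1/2, by norm_num, by norm_num, by norm_num, ?_⟩
      funext i
      simp only [Pi.add_apply, Pi.smul_apply, smul_eq_mul]
      ring
    have := hxe h1 h2 hseg
    have := congrFun this j₀.1
    have hj : ε * cc j₀ = 0 := by
      have hcj : ch j₀.1 = cc j₀ := hchF j₀
      nlinarith [this, hcj]
    exact hj₀ (by
      have := mul_eq_zero.mp hj
      rcases this with h | h
      · exact absurd h (ne_of_gt hεpos)
      · exact h)
  -- Step C: the rows (restricted to F) span ℝ^F
  set Rw : T → ({ i // i ∈ F } → ℝ) := fun t => fun j => (Q j.1 t : ℝ) with hRw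
  have hspan : Submodule.span ℝ (Set.range Rw) = ⊤ := by
    by_contra hne
    obtain ⟨φ, hφ0, hφ⟩ := Submodule.exists_dual_map_eq_bot_of_lt_top
      (lt_top_iff_ne_top.mpr hne) inferInstance
    set cc : { i // i ∈ F } → ℝ := fun j => φ (fun k => if j = k then 1 else 0) with hcc
    have hφeq : ∀ y : { i // i ∈ F } → ℝ, φ y = ∑ j, y j * cc j := by
      intro y
      conv_lhs => rw [pi_eq_sum_univ y, map_sum]
      exact Finset.sum_congr rfl fun j _ => by rw [map_smul, smul_eq_mul, hcc]
    have hccne : ∃ j, cc j ≠ 0 := by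
      by_contra hc
      push_neg at hc
      apply hφ0
      apply LinearMap.ext
      intro y
      rw [hφeq y]
      simp [hc]
    obtain ⟨j₁, hj₁⟩ := hccne
    have hRw0 : ∀ t, φ (Rw t) = 0 := by
      intro t
      have hmemb : φ (Rw t) ∈ Submodule.map φ (Submodule.span ℝ (Set.range Rw)) :=
        Submodule.mem_map_of_mem (Submodule.subset_span (Set.mem_range_self t))
      rw [hφ] at hmemb
      simpa using hmemb
    have : ∀ j, cc j = 0 := by
      have hz : (∑ j, cc j • fun t => (Q j.1 t : ℝ)) = 0 := by
        funext t
        simp only [Finset.sum_apply, Pi.smul_apply, smul_eq_mul, Pi.zero_apply]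
        have := hRw0 t
        rw [hφeq] at this
        rw [← this]
        exact Finset.sum_congr rfl fun j _ => by rw [hRw]; ring
      exact Fintype.linearIndependent_iff.mp hli _ hz
    exact hj₁ (this j₁)
  -- Step D: extract a row basis
  obtain ⟨b, hbsub, hbspan, hbli⟩ := exists_linearIndependent ℝ (Set.range Rw)
  rw [hspan] at hbspan
  have hbfin : b.Finite := (Set.finite_range Rw).subset hbsub
  haveI : Fintype b := hbfin.fintype
  have hbbas : Module.Basis b ℝ ({ i // i ∈ F } → ℝ) :=
    Module.Basis.mk hbli (by rw [Subtype.range_coe, hbspan])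
  have hcard : Fintype.card b = F.card := by
    rw [← Module.finrank_eq_card_basis hbbas, Module.finrank_pi, Fintype.card_coe]
  set k : ℕ := F.card with hk
  have eb : Fin k ≃ b := (Fintype.equivFinOfCardEq hcard).symm
  set eF : { i // i ∈ F } ≃ Fin k := F.equivFin with heF
  -- choose a row index for each basis element
  have hτ : ∀ w : b, ∃ t : T, Rw t = w.1 := fun w => hbsub w.2
  choose τ hτeq using hτ
  set f : Fin k → T := fun a => τ (eb a) with hf
  set g : Fin k → I := fun j => (eF.symm j).1 with hg
  have hfinj : Function.Injective f := by
    intro a a' h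
    have h2 : Rw (f a) = Rw (f a') := congrArg Rw h
    simp only [hf] at h2
    rw [hτeq (eb a), hτeq (eb a')] at h2
    exact eb.injective (Subtype.ext h2)
  have hginj : Function.Injective g := by
    intro a a' h
    exact eF.symm.injective (Subtype.ext h)
  -- Step E: the square submatrix is invertible
  set Bz : Matrix (Fin k) (Fin k) ℤ := (Matrix.of fun (t : T) (i : I) => Q i t).submatrix f g
    with hBz
  set Br : Matrix (Fin k) (Fin k) ℝ := Bz.map (Int.cast : ℤ → ℝ) with hBr
  have hrows1 : LinearIndependent ℝ (fun a : Fin k => Rw (f a)) := by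
    have hcomp : LinearIndependent ℝ (fun a : Fin k => ((eb a : b) : { i // i ∈ F } → ℝ)) :=
      hbli.comp (fun a => eb a) eb.injective
    have : (fun a : Fin k => Rw (f a)) = fun a : Fin k => ((eb a : b) : { i // i ∈ F } → ℝ) := by
      funext a
      simp only [hf]
      exact hτeq (eb a)
    rw [this]
    exact hcomp
  have hrows : LinearIndependent ℝ (fun a : Fin k => Br a) := by
    set E := LinearEquiv.funCongrLeft ℝ ℝ (eF.symm : Fin k ≃ { i // i ∈ F }) with hE
    have h2 := hrows1.map' E.toLinearMap E.ker
    have : (fun a : Fin k => Br a) = fun a : Fin k => E.toLinearMap (Rw (f a)) := by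
      funext a
      funext j
      simp only [hBr, hBz, hE, Matrix.map_apply, Matrix.submatrix_apply, Matrix.of_apply,
        LinearEquiv.coe_coe, LinearEquiv.funCongrLeft_apply, LinearMap.funLeft_apply,
        hRw, hg]
    rw [this]
    exact h2
  have hBrUnit : IsUnit Br := Matrix.linearIndependent_rows_iff_isUnit.mp hrows
  have hdetBr : Br.det ≠ 0 := by
    have := (Matrix.isUnit_iff_isUnit_det Br).mp hBrUnit
    exact this.ne_zero
  have hdetcast : ((Bz.det : ℤ) : ℝ) = Br.det := by
    have h := RingHom.map_det (Int.castRingHom ℝ) Bz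
    simpa [RingHom.mapMatrix_apply] using h
  have hdetBz : Bz.det ≠ 0 := by
    intro h
    apply hdetBr
    rw [← hdetcast, h, Int.cast_zero]
  have hdet : Bz.det = 1 ∨ Bz.det = -1 := by
    rcases hTU k f g hfinj hginj with h | h | h
    · exact absurd h hdetBz
    · exact Or.inl h
    · exact Or.inr h
  -- Step F: solve the linear system by Cramer
  have hwex : ∀ i, ∃ n : ℤ, i ∉ F → x i = (n : ℝ) := by
    intro i
    by_cases h : i ∈ F
    · exact ⟨0, fun h' => absurd h h'⟩
    · obtain ⟨n, hn⟩ := houtZ i h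
      exact ⟨n, fun _ => hn⟩
  choose w hw using hwex
  set n0 : Fin k → ℤ := fun a => -∑ i ∈ Fᶜ, Q i (f a) * w i with hn0
  have hsys : ∀ a, (Br.mulVec (fun j => x (g j))) a = ((n0 a : ℤ) : ℝ) := by
    intro a
    have hre : (Br.mulVec (fun j => x (g j))) a = ∑ i ∈ F, (Q i (f a) : ℝ) * x i := by
      have e1 : (Br.mulVec (fun j => x (g j))) a
          = ∑ j : Fin k, (Q (g j) (f a) : ℝ) * x (g j) := by
        simp only [Matrix.mulVec, dotProduct, hBr, hBz, Matrix.map_apply,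
          Matrix.submatrix_apply, Matrix.of_apply]
      have e2 : ∑ j : Fin k, (Q (g j) (f a) : ℝ) * x (g j)
          = ∑ q : { i // i ∈ F }, (Q q.1 (f a) : ℝ) * x q.1 := by
        apply Fintype.sum_equiv eF.symm
        intro j
        simp only [hg]
      have e3 : ∑ q : { i // i ∈ F }, (Q q.1 (f a) : ℝ) * x q.1
          = ∑ i ∈ F, (Q i (f a) : ℝ) * x i :=
        Finset.sum_attach F (fun i => (Q i (f a) : ℝ) * x i)
      rw [e1, e2, e3]
    have hsplit : (∑ i ∈ F, (Q i (f a) : ℝ) * x i) + ∑ i ∈ Fᶜ, (Q i (f a) : ℝ) * x i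
        = ∑ i, (Q i (f a) : ℝ) * x i := Finset.sum_add_sum_compl F _
    have hcompl : ∑ i ∈ Fᶜ, (Q i (f a) : ℝ) * x i = ((∑ i ∈ Fᶜ, Q i (f a) * w i : ℤ) : ℝ) := by
      push_cast
      apply Finset.sum_congr rfl
      intro i hi
      rw [hw i (Finset.mem_compl.mp hi)]
    rw [hre]
    have hx0 := hxc (f a)
    simp only [hn0]
    rw [Int.cast_neg, ← hcompl]
    linarith [hsplit, hx0]
  have hcr : Br.det • (fun j => x (g j)) = Br.adjugate.mulVec (fun a => ((n0 a : ℤ) : ℝ)) := by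
    have hmv : Br.mulVec (fun j => x (g j)) = fun a => ((n0 a : ℤ) : ℝ) := funext hsys
    calc Br.det • (fun j => x (g j))
        = Br.det • ((1 : Matrix (Fin k) (Fin k) ℝ).mulVec (fun j => x (g j))) := by
          rw [Matrix.one_mulVec]
      _ = (Br.det • (1 : Matrix (Fin k) (Fin k) ℝ)).mulVec (fun j => x (g j)) := by
          rw [Matrix.smul_mulVec]
      _ = (Br.adjugate * Br).mulVec (fun j => x (g j)) := by rw [Matrix.adjugate_mul]
      _ = Br.adjugate.mulVec (Br.mulVec (fun j => x (g j))) := by rw [Matrix.mulVec_mulVec]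
      _ = Br.adjugate.mulVec (fun a => ((n0 a : ℤ) : ℝ)) := by rw [hmv]
  have hadj : ∀ j a, Br.adjugate j a = ((Bz.adjugate j a : ℤ) : ℝ) := by
    intro j a
    have := RingHom.map_adjugate (Int.castRingHom ℝ) Bz
    have h2 := congrFun (congrFun (congrArg (fun M => (M : Matrix (Fin k) (Fin k) ℝ)) this) j) a
    simpa [RingHom.mapMatrix_apply, Matrix.map_apply, hBr] using h2.symm
  have hint : ∀ j : Fin k, ∃ n : ℤ, x (g j) = (n : ℝ) := by
    intro j
    have h1 := congrFun hcr j
    simp only [Pi.smul_apply, smul_eq_mul] at h1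
    have h2 : Br.adjugate.mulVec (fun a => ((n0 a : ℤ) : ℝ)) j
        = ((∑ a, Bz.adjugate j a * n0 a : ℤ) : ℝ) := by
      simp only [Matrix.mulVec, dotProduct]
      push_cast
      exact Finset.sum_congr rfl fun a _ => by rw [hadj]
    rw [h2] at h1
    rw [← hdetcast] at h1
    rcases hdet with hd | hd
    · refine ⟨∑ a, Bz.adjugate j a * n0 a, ?_⟩
      rw [hd] at h1
      push_cast at h1 ⊢
      linarith
    · refine ⟨-∑ a, Bz.adjugate j a * n0 a, ?_⟩
      rw [hd] at h1
      push_cast at h1 ⊢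
      linarith
  intro i
  by_cases hi : i ∈ F
  · obtain ⟨n, hn⟩ := hint (eF ⟨i, hi⟩)
    refine ⟨n, ?_⟩
    rw [← hn]
    congr 1
    simp only [hg, Equiv.symm_apply_apply]
  · exact houtZ i hi



private def dotL {I : Type*} [Fintype I] (w : I → ℝ) : (I → ℝ) →ₗ[ℝ] ℝ where
  toFun := fun δ => ∑ i, δ i * w i
  map_add' := by
    intro a b
    simp only [Pi.add_apply, add_mul, Finset.sum_add_distrib]
  map_smul' := by
    intro r a
    simp only [Pi.smul_apply, smul_eq_mul, RingHom.id_apply, Finset.mul_sum]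
    exact Finset.sum_congr rfl fun i _ => by ring

set_option maxHeartbeats 1000000 in
/-- With the totally unimodular clearing matrix and the naive scaling factor
`V = 1 + Σᵢ δ̄ᵢ`, any maximizer of the combined weighted objective `V·S(δ) + Vol(δ)` over
the feasible polytope maximizes the surplus `S`, and among the surplus maximizers it
maximizes the volume `Vol`. -/
theorem weighted_objective_naive_scaling
    {I T : Type*} [Fintype I] [Fintype T]
    (Q p : I → T → ℤ) (δbar : I → ℕ)
    (hTU : IsTotallyUnimodularMat (Matrix.of fun (t : T) (i : I) => Q i t))
    (V : ℝ) (hV : V = 1 + ∑ i, (δbar i : ℝ))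
    (δstar : I → ℝ)
    (hclear : ∀ t, ∑ i, (Q i t : ℝ) * δstar i = 0)
    (hbnd : ∀ i, 0 ≤ δstar i ∧ δstar i ≤ (δbar i : ℝ))
    (hmax : ∀ δ : I → ℝ,
        (∀ t, ∑ i, (Q i t : ℝ) * δ i = 0) →
        (∀ i, 0 ≤ δ i ∧ δ i ≤ (δbar i : ℝ)) →
        V * (∑ i, δ i * ∑ t, (p i t : ℝ) * (Q i t : ℝ)) + ∑ i, δ i
          ≤ V * (∑ i, δstar i * ∑ t, (p i t : ℝ) * (Q i t : ℝ)) + ∑ i, δstar i) :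
    (∀ δ : I → ℝ,
        (∀ t, ∑ i, (Q i t : ℝ) * δ i = 0) →
        (∀ i, 0 ≤ δ i ∧ δ i ≤ (δbar i : ℝ)) →
        ∑ i, δ i * ∑ t, (p i t : ℝ) * (Q i t : ℝ)
          ≤ ∑ i, δstar i * ∑ t, (p i t : ℝ) * (Q i t : ℝ)) ∧
    (∀ δ : I → ℝ,
        (∀ t, ∑ i, (Q i t : ℝ) * δ i = 0) →
        (∀ i, 0 ≤ δ i ∧ δ i ≤ (δbar i : ℝ)) →
        ∑ i, δ i * ∑ t, (p i t : ℝ) * (Q i t : ℝ)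
          = ∑ i, δstar i * ∑ t, (p i t : ℝ) * (Q i t : ℝ) →
        ∑ i, δ i ≤ ∑ i, δstar i) := by
  classical
  have hV1 : (1:ℝ) ≤ V := by
    rw [hV]
    have : (0:ℝ) ≤ ∑ i, (δbar i : ℝ) := Finset.sum_nonneg fun i _ => Nat.cast_nonneg _
    linarith
  have hVpos : (0:ℝ) < V := lt_of_lt_of_le one_pos hV1
  set P : Set (I → ℝ) := {δ : I → ℝ | (∀ t, ∑ i, (Q i t : ℝ) * δ i = 0) ∧
      ∀ i, 0 ≤ δ i ∧ δ i ≤ (δbar i : ℝ)} with hP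
  have hδP : δstar ∈ P := ⟨hclear, hbnd⟩
  set c : I → ℝ := fun i => ∑ t, (p i t : ℝ) * (Q i t : ℝ) with hc
  have hcZ : ∀ i, c i = ((∑ t, p i t * Q i t : ℤ) : ℝ) := by
    intro i
    rw [hc]
    push_cast
    rfl
  -- the linear functionals
  set SL : (I → ℝ) →ₗ[ℝ] ℝ := dotL c with hSL
  set VolL : (I → ℝ) →ₗ[ℝ] ℝ := dotL (fun _ => 1) with hVolL
  set cS : (I → ℝ) →L[ℝ] ℝ := LinearMap.toContinuousLinearMap SL with hcS
  set cf : (I → ℝ) →L[ℝ] ℝ := LinearMap.toContinuousLinearMap (V • SL + VolL) with hcf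
  have hSapp : ∀ δ : I → ℝ, cS δ = ∑ i, δ i * c i := by
    intro δ
    simp [hcS, hSL, dotL]
  have hfapp : ∀ δ : I → ℝ, cf δ = V * (∑ i, δ i * c i) + ∑ i, δ i := by
    intro δ
    simp [hcf, hSL, hVolL, dotL, LinearMap.add_apply, LinearMap.smul_apply, smul_eq_mul]
  have hVol_le : ∀ δ : I → ℝ, δ ∈ P → ∑ i, δ i ≤ V - 1 := by
    intro δ hδ
    rw [hV]
    have := Finset.sum_le_sum (fun i (_ : i ∈ Finset.univ) => (hδ.2 i).2)
    linarith
  have hVol_nn : ∀ δ : I → ℝ, δ ∈ P → 0 ≤ ∑ i, δ i := fun δ hδ =>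
    Finset.sum_nonneg fun i _ => (hδ.2 i).1
  -- compactness and convexity of P
  have hPsub : P ⊆ Set.pi Set.univ (fun i => Set.Icc (0:ℝ) (δbar i)) := by
    intro δ hδ i _
    exact ⟨(hδ.2 i).1, (hδ.2 i).2⟩
  have hPclosed : IsClosed P := by
    have hPeq : P = (⋂ t, {δ : I → ℝ | ∑ i, (Q i t : ℝ) * δ i = 0}) ∩
        (⋂ i, {δ : I → ℝ | δ i ∈ Set.Icc (0:ℝ) (δbar i)}) := by
      ext δ
      simp only [hP, Set.mem_setOf_eq, Set.mem_inter_iff, Set.mem_iInter, Set.mem_Icc]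
    rw [hPeq]
    apply IsClosed.inter
    · exact isClosed_iInter fun t => isClosed_eq
        (continuous_finset_sum _ fun i _ => continuous_const.mul (continuous_apply i)) continuous_const
    · exact isClosed_iInter fun i => isClosed_Icc.preimage (continuous_apply i)
  have hPcomp : IsCompact P :=
    (isCompact_univ_pi fun i => isCompact_Icc).of_isClosed_subset hPclosed hPsub
  have hPconv : Convex ℝ P := by
    intro a ha b hb s t hs ht hst
    constructor
    · intro τ
      have h1 := ha.1 τ
      have h2 := hb.1 τ
      have : ∑ i, (Q i τ : ℝ) * (s • a + t • b) i
          = s * (∑ i, (Q i τ : ℝ) * a i) + t * (∑ i, (Q i τ : ℝ) * b i) := by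
        rw [Finset.mul_sum, Finset.mul_sum, ← Finset.sum_add_distrib]
        apply Finset.sum_congr rfl
        intro i _
        simp only [Pi.add_apply, Pi.smul_apply, smul_eq_mul]
        ring
      rw [this, h1, h2]
      ring
    · intro i
      have h1 := ha.2 i
      have h2 := hb.2 i
      have he : (s • a + t • b) i = s * a i + t * b i := rfl
      constructor
      · rw [he]
        exact add_nonneg (mul_nonneg hs h1.1) (mul_nonneg ht h2.1)
      · rw [he]
        calc s * a i + t * b i ≤ s * (δbar i : ℝ) + t * (δbar i : ℝ) :=
              add_le_add (mul_le_mul_of_nonneg_left h1.2 hs)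
                (mul_le_mul_of_nonneg_left h2.2 ht)
          _ = (s + t) * (δbar i : ℝ) := by ring
          _ = (δbar i : ℝ) := by rw [hst, one_mul]
  -- maximizer of S at an extreme point
  obtain ⟨y, hyP, hymax⟩ := hPcomp.exists_isMaxOn ⟨δstar, hδP⟩ cS.continuous.continuousOn
  set H : Set (I → ℝ) := {x ∈ P | ∀ z ∈ P, cS z ≤ cS x} with hH
  have hHexp : IsExposed ℝ P H := fun _ => ⟨cS, rfl⟩
  have hyH : y ∈ H := ⟨hyP, fun z hz => hymax hz⟩
  obtain ⟨u, huH⟩ := (hHexp.isCompact hPcomp).extremePoints_nonempty ⟨y, hyH⟩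
  have huextP : u ∈ Set.extremePoints ℝ P :=
    hHexp.isExtreme.extremePoints_subset_extremePoints huH
  have huP : u ∈ P := huextP.1
  have humax : ∀ z ∈ P, cS z ≤ cS u := (mem_extremePoints.mp huH).1.2
  -- integer value of cS at integral points
  have hval : ∀ v : I → ℝ, (∀ i, ∃ n : ℤ, v i = n) → ∃ N : ℤ, cS v = (N : ℝ) := by
    intro v hv
    choose nv hnv using hv
    refine ⟨∑ i, nv i * (∑ t, p i t * Q i t), ?_⟩
    rw [hSapp]
    push_cast
    apply Finset.sum_congr rfl
    intro i _
    rw [hnv i, hcZ i]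
    push_cast
    ring
  have huint : ∀ i, ∃ n : ℤ, u i = n := by
    have h := huextP
    rw [hP] at h
    exact aux_extreme_integral Q δbar hTU u h
  obtain ⟨N, hNu⟩ := hval u huint
  -- the optimal face of the combined functional
  set G : Set (I → ℝ) := {x ∈ P | ∀ z ∈ P, cf z ≤ cf x} with hG
  have hGexp : IsExposed ℝ P G := fun _ => ⟨cf, rfl⟩
  have hδG : δstar ∈ G := by
    refine ⟨hδP, fun z hz => ?_⟩
    rw [hfapp, hfapp]
    exact hmax z hz.1 hz.2
  -- every extreme point of G attains the maximal surplus N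
  have hGkey : ∀ v ∈ Set.extremePoints ℝ G, cS v = (N : ℝ) := by
    intro v hv
    have hvextP : v ∈ Set.extremePoints ℝ P :=
      hGexp.isExtreme.extremePoints_subset_extremePoints hv
    have hvP : v ∈ P := hvextP.1
    have hvG : v ∈ G := hv.1
    have hvint : ∀ i, ∃ n : ℤ, v i = n := by
      have h := hvextP
      rw [hP] at h
      exact aux_extreme_integral Q δbar hTU v h
    obtain ⟨M, hMv⟩ := hval v hvint
    have h1 : cS v ≤ cS u := humax v hvP
    have h2 : cf u ≤ cf v := hvG.2 u huP
    rw [hfapp, hfapp, ← hSapp, ← hSapp] at h2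
    have h3 : ∑ i, v i ≤ V - 1 := hVol_le v hvP
    have h4 : 0 ≤ ∑ i, u i := hVol_nn u huP
    -- V * cS u ≤ V * cS v + (V - 1)
    have h5 : V * cS u - V * cS v ≤ V - 1 := by linarith
    have h6 : (N : ℝ) - (M : ℝ) < 1 := by
      rw [← hNu, ← hMv]
      by_contra hcon
      push_neg at hcon
      have h9 : V * 1 ≤ V * (cS u - cS v) :=
        mul_le_mul_of_nonneg_left hcon (le_of_lt hVpos)
      rw [mul_sub, mul_one] at h9
      linarith
    have h7 : M ≤ N := by
      have : (M : ℝ) ≤ (N : ℝ) := by rw [← hNu, ← hMv]; exact h1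
      exact_mod_cast this
    have h8 : N ≤ M := by
      have : (N : ℝ) < (M : ℝ) + 1 := by linarith
      have : (N : ℝ) < ((M + 1 : ℤ) : ℝ) := by push_cast; linarith
      have := Int.cast_lt.mp this
      omega
    rw [hMv]
    congr 1
    omega
  -- Krein-Milman: δstar has surplus N
  have hGcomp := hGexp.isCompact hPcomp
  have hGconv := hGexp.convex hPconv
  have hKM : G = closure (convexHull ℝ (Set.extremePoints ℝ G)) :=
    (closure_convexHull_extremePoints hGcomp hGconv).symm
  set D : Set (I → ℝ) := {δ : I → ℝ | (N : ℝ) ≤ cS δ} with hD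
  have hDclosed : IsClosed D := isClosed_le continuous_const cS.continuous
  have hDconv : Convex ℝ D :=
    convex_halfSpace_ge ⟨fun a b => by simp, fun r a => by simp⟩ (N : ℝ)
  have hsubD : Set.extremePoints ℝ G ⊆ D := fun v hv => (hGkey v hv).ge
  have hGD : G ⊆ D := by
    rw [hKM]
    exact hDclosed.closure_subset_iff.mpr (convexHull_min hsubD hDconv)
  have hδD : (N : ℝ) ≤ cS δstar := hGD hδG
  have hδN : cS δstar = (N : ℝ) := le_antisymm (hNu ▸ humax δstar hδP) hδD
  constructor
  · intro δ h1 h2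
    have hle := humax δ ⟨h1, h2⟩
    rw [hSapp, hSapp] at hle
    rw [hSapp] at hδN hNu
    show ∑ i, δ i * c i ≤ ∑ i, δstar i * c i
    calc ∑ i, δ i * c i ≤ ∑ i, u i * c i := hle
      _ = (N : ℝ) := hNu
      _ = ∑ i, δstar i * c i := hδN.symm
  · intro δ h1 h2 heq
    have h := hmax δ h1 h2
    rw [heq] at h
    linarith
end

section
/- Let m, n ∈ ℕ with m ≥ 1, let A be an m × n integer matrix that is totally unimodular and has rank m, let c ∈ ℤⁿ, d, u ∈ ℝⁿ, b ∈ ℝᵐ, set d̄ = max_i |d_i|, and let G ∈ ℝ with G > 2·m·d̄. Consider the primal feasible set P = {x ∈ ℝⁿ | A x = b, 0 ≤ x ≤ u} and, for an objective vector w ∈ ℝⁿ, the dual feasible set D(w) = {(π, γ, λ) ∈ ℝᵐ × ℝⁿ × ℝⁿ | Aᵀπ + γ − λ = w, γ ≥ 0, λ ≥ 0} with dual objective bᵀπ + uᵀγ. Suppose x* is an extreme point of P maximizing (G·c + d)ᵀx over P, and (π*, γ*, λ*) is an extreme point of D(G·c + d) minimizing bᵀπ + uᵀγ over D(G·c + d).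 Then x* is an extreme point of P maximizing cᵀx over P, and the rounded vector π̄ defined by π̄_i = ⌊π*_i / G + 1/2⌋ for i = 1, …, m is the π-part of an extreme point of D(c) minimizing bᵀπ + uᵀγ over D(c), i.e., there exist γ̄, λ̄ such that (π̄, γ̄, λ̄) is a dual optimal extreme point for the linear program max {cᵀx | A x = b, 0 ≤ x ≤ u}. -/
set_option maxHeartbeats 1600000


open Matrix
open Pointwise

/-- The primal feasible set `{x | A x = b, 0 ≤ x ≤ u}`. -/
def primalSet {m n : ℕ} (A : Matrix (Fin m) (Fin n) ℝ) (b : Fin m → ℝ) (u : Fin n → ℝ) :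
    Set (Fin n → ℝ) :=
  {x | A.mulVec x = b ∧ ∀ j, 0 ≤ x j ∧ x j ≤ u j}

/-- The dual feasible set `{(π, γ, λ) | Aᵀ π + γ − λ = w, γ ≥ 0, λ ≥ 0}`. -/
def dualSet {m n : ℕ} (A : Matrix (Fin m) (Fin n) ℝ) (w : Fin n → ℝ) :
    Set ((Fin m → ℝ) × (Fin n → ℝ) × (Fin n → ℝ)) :=
  {y | Aᵀ.mulVec y.1 + y.2.1 - y.2.2 = w ∧ (∀ j, 0 ≤ y.2.1 j) ∧ (∀ j, 0 ≤ y.2.2 j)}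

/-- weak duality -/
lemma weak_duality {m n : ℕ} (A : Matrix (Fin m) (Fin n) ℝ) (b : Fin m → ℝ) (u w : Fin n → ℝ)
    (x : Fin n → ℝ) (y : (Fin m → ℝ) × (Fin n → ℝ) × (Fin n → ℝ))
    (hx : x ∈ primalSet A b u) (hy : y ∈ dualSet A w) :
    w ⬝ᵥ x ≤ b ⬝ᵥ y.1 + u ⬝ᵥ y.2.1 := by
  obtain ⟨hAx, hbox⟩ := hx
  obtain ⟨hcon, hγ, hlam⟩ := hy
  have h1 : w ⬝ᵥ x = y.1 ⬝ᵥ (A *ᵥ x) + y.2.1 ⬝ᵥ x - y.2.2 ⬝ᵥ x := by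
    rw [← hcon]
    simp [sub_dotProduct, add_dotProduct, mulVec_transpose, ← dotProduct_mulVec]
  rw [h1, hAx]
  have h2 : y.1 ⬝ᵥ b = b ⬝ᵥ y.1 := dotProduct_comm _ _
  have h3 : y.2.1 ⬝ᵥ x ≤ u ⬝ᵥ y.2.1 := by
    rw [dotProduct_comm u y.2.1]
    exact Finset.sum_le_sum fun j _ => mul_le_mul_of_nonneg_left (hbox j).2 (hγ j)
  have h4 : 0 ≤ y.2.2 ⬝ᵥ x :=
    Finset.sum_nonneg fun j _ => mul_nonneg (hlam j) (hbox j).1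
  linarith

lemma dual_le_primal {m n : ℕ} (A : Matrix (Fin m) (Fin n) ℝ) (b : Fin m → ℝ) (u w : Fin n → ℝ)
    (xs : Fin n → ℝ) (ys : (Fin m → ℝ) × (Fin n → ℝ) × (Fin n → ℝ))
    (hxs : xs ∈ primalSet A b u)
    (hxopt : ∀ x ∈ primalSet A b u, w ⬝ᵥ x ≤ w ⬝ᵥ xs)
    (hyopt : ∀ y ∈ dualSet A w, b ⬝ᵥ ys.1 + u ⬝ᵥ ys.2.1 ≤ b ⬝ᵥ y.1 + u ⬝ᵥ y.2.1) :
    b ⬝ᵥ ys.1 + u ⬝ᵥ ys.2.1 ≤ w ⬝ᵥ xs := by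
  have hu : ∀ j, 0 ≤ u j := fun j => le_trans (hxs.2 j).1 (hxs.2 j).2
  set v : ℝ := w ⬝ᵥ xs with hv
  refine le_of_forall_pos_le_add fun ε hε => ?_
  set box : Set (Fin n → ℝ) := Set.univ.pi fun j => Set.Icc 0 (u j) with hbox
  have hbox_mem : ∀ z : Fin n → ℝ, z ∈ box ↔ ∀ j, 0 ≤ z j ∧ z j ≤ u j := by
    intro z; simp only [hbox, Set.mem_univ_pi, Set.mem_Icc]
  have hbox_cpt : IsCompact box := isCompact_univ_pi fun j => isCompact_Icc
  have hbox_cvx : Convex ℝ box := convex_pi fun j _ => convex_Icc _ _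
  have hbox_ne : xs ∈ box := (hbox_mem xs).2 hxs.2
  set dlin : (Fin n → ℝ) →ₗ[ℝ] ℝ :=
    { toFun := fun x => w ⬝ᵥ x
      map_add' := fun x y => dotProduct_add w x y
      map_smul' := fun r x => by simp [dotProduct_smul] } with hdlin
  set L : (Fin n → ℝ) →ₗ[ℝ] (Fin m → ℝ) × ℝ := (A.mulVecLin).prod dlin with hL
  have hLx : ∀ x, L x = (A *ᵥ x, w ⬝ᵥ x) := fun x => rfl
  have hLcont : Continuous L := L.continuous_of_finiteDimensional
  set C : Set ((Fin m → ℝ) × ℝ) := L '' box with hC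
  have hC_cpt : IsCompact C := hbox_cpt.image hLcont
  have hC_cvx : Convex ℝ C := hbox_cvx.linear_image L
  set ray : Set ((Fin m → ℝ) × ℝ) := {0} ×ˢ Set.Iic (0:ℝ) with hray
  have hray_cl : IsClosed ray := isClosed_singleton.prod isClosed_Iic
  have hray_cvx : Convex ℝ ray := (convex_singleton _).prod (convex_Iic 0)
  have h0ray : ((0,0) : (Fin m → ℝ) × ℝ) ∈ ray := Set.mem_prod.2 ⟨rfl, Set.mem_Iic.2 (le_refl 0)⟩
  set K : Set ((Fin m → ℝ) × ℝ) := C + ray with hK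
  have hK_cl : IsClosed K := by
    have h := IsClosed.vadd_left_of_isCompact (t := ray) hray_cl hC_cpt
    have heq : C +ᵥ ray = K := by
      ext p
      simp only [Set.mem_vadd_set, hK, Set.mem_add, vadd_eq_add]
    rwa [heq] at h
  have hK_cvx : Convex ℝ K := hC_cvx.add hray_cvx
  have hnot : (b, v + ε) ∉ K := by
    rintro ⟨p, hp, q, hq, hpq⟩
    obtain ⟨x, hxbox, rfl⟩ := hp
    obtain ⟨hq1, hq2⟩ := Set.mem_prod.1 hq
    rw [hLx x] at hpq
    have h1 : A *ᵥ x + q.1 = b := congrArg Prod.fst hpq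
    have h2 : w ⬝ᵥ x + q.2 = v + ε := congrArg Prod.snd hpq
    rw [Set.mem_singleton_iff.1 hq1, add_zero] at h1
    have hxP : x ∈ primalSet A b u := ⟨h1, (hbox_mem x).1 hxbox⟩
    have h3 : w ⬝ᵥ x ≤ v := hxopt x hxP
    have hq2' : q.2 ≤ (0:ℝ) := hq2
    linarith
  obtain ⟨f, β, hfK, hfpt⟩ := geometric_hahn_banach_closed_point hK_cvx hK_cl hnot
  set α : ℝ := f (0, 1) with hα
  set πf : Fin m → ℝ := fun i => f ((fun j => if i = j then (1:ℝ) else 0), 0) with hπf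
  have hf_eq : ∀ (y : Fin m → ℝ) (r : ℝ), f (y, r) = (∑ i, y i * πf i) + r * α := by
    intro y r
    have hsplit : (y, r) = (y, (0:ℝ)) + ((0:Fin m → ℝ), r) := by simp
    rw [hsplit, map_add]
    have h2 : f ((0:Fin m → ℝ), r) = r * α := by
      have h0 : ((0:Fin m → ℝ), r) = r • ((0:Fin m → ℝ), (1:ℝ)) := by simp
      rw [h0, ContinuousLinearMap.map_smul]; simp [hα, smul_eq_mul]
    set fy : (Fin m → ℝ) →ₗ[ℝ] ℝ :=
      (f : ((Fin m → ℝ) × ℝ) →ₗ[ℝ] ℝ).comp (LinearMap.inl ℝ (Fin m → ℝ) ℝ) with hfy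
    have hfy_apply : ∀ z : Fin m → ℝ, fy z = f (z, 0) := fun z => rfl
    have h1 : f (y, (0:ℝ)) = ∑ i, y i * πf i := by
      rw [← hfy_apply, LinearMap.pi_apply_eq_sum_univ fy y]
      exact Finset.sum_congr rfl fun i _ => by rw [smul_eq_mul, hfy_apply]
    rw [h1, h2]
  have hbvK : ((b, v) : (Fin m → ℝ) × ℝ) ∈ K := by
    have hCx : L xs ∈ C := ⟨xs, hbox_ne, rfl⟩
    have h := Set.add_mem_add hCx h0ray
    rw [hLx xs, hxs.1] at h
    simpa using h
  have hαpos : 0 < α := by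
    have h1 := hfK _ hbvK
    have h2 := hfpt
    rw [hf_eq b v] at h1
    rw [hf_eq b (v + ε)] at h2
    nlinarith
  set π : Fin m → ℝ := fun i => -(πf i) / α with hπd
  have hπf_eq : ∀ i, πf i = -(α * π i) := by
    intro i; rw [hπd]; field_simp
  have hsum_eq : ∀ y : Fin m → ℝ, (∑ i, y i * πf i) = -(α * (π ⬝ᵥ y)) := by
    intro y
    have h0 : α * (π ⬝ᵥ y) = ∑ i, α * (π i * y i) := by
      rw [dotProduct, Finset.mul_sum]
    rw [h0, ← Finset.sum_neg_distrib]
    exact Finset.sum_congr rfl fun i _ => by rw [hπf_eq]; ring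
  set t : Fin n → ℝ := fun j => w j - (Aᵀ *ᵥ π) j with ht
  set γ : Fin n → ℝ := fun j => max (t j) 0 with hγ
  set lam : Fin n → ℝ := fun j => max (-(t j)) 0 with hlam
  have hyfeas : (π, γ, lam) ∈ dualSet A w := by
    refine ⟨?_, fun j => le_max_right _ _, fun j => le_max_right _ _⟩
    funext j
    have hmax := max_zero_sub_max_neg_zero_eq_self (t j)
    have htj : t j = w j - (Aᵀ *ᵥ π) j := rfl
    simp only [Pi.add_apply, Pi.sub_apply]
    have : γ j - lam j = t j := hmax
    rw [show (Aᵀ *ᵥ π) j + γ j - lam j = (Aᵀ *ᵥ π) j + (γ j - lam j) by ring, this, htj]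
    ring
  set xh : Fin n → ℝ := fun j => if 0 < t j then u j else 0 with hxh
  have hxh_box : xh ∈ box := by
    rw [hbox_mem]; intro j
    by_cases h : 0 < t j <;> simp [hxh, h, hu j, le_refl]
  have hsep : ∀ x ∈ box, -(α * (π ⬝ᵥ (A *ᵥ x))) + (w ⬝ᵥ x) * α < β := by
    intro x hx
    have hmem : L x ∈ K := by
      have hCx : L x ∈ C := ⟨x, hx, rfl⟩
      have h := Set.add_mem_add hCx h0ray
      rw [show ((0,0) : (Fin m → ℝ) × ℝ) = 0 from rfl, add_zero] at h
      exact h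
    have h := hfK _ hmem
    rw [hLx x, hf_eq, hsum_eq] at h
    exact h
  have hβlt : β < -(α * (π ⬝ᵥ b)) + (v + ε) * α := by
    have h := hfpt
    rw [hf_eq, hsum_eq] at h
    exact h
  have hobj : b ⬝ᵥ π + u ⬝ᵥ γ < v + ε := by
    have h1 := hsep xh hxh_box
    have h4 := lt_trans h1 hβlt
    have h5 : w ⬝ᵥ xh + π ⬝ᵥ b - π ⬝ᵥ (A *ᵥ xh) < v + ε := by nlinarith
    have h6 : u ⬝ᵥ γ = w ⬝ᵥ xh - π ⬝ᵥ (A *ᵥ xh) := by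
      have hswap : π ⬝ᵥ (A *ᵥ xh) = (Aᵀ *ᵥ π) ⬝ᵥ xh := by
        rw [mulVec_transpose, ← dotProduct_mulVec]
      rw [hswap]
      simp only [dotProduct, ← Finset.sum_sub_distrib]
      refine Finset.sum_congr rfl fun j _ => ?_
      have heq : w j * xh j - (Aᵀ *ᵥ π) j * xh j = t j * xh j := by
        have htj : t j = w j - (Aᵀ *ᵥ π) j := rfl
        rw [htj]; ring
      rw [heq]
      have hγj : γ j = max (t j) 0 := rfl
      have hxhj : xh j = if 0 < t j then u j else 0 := rfl
      rw [hγj, hxhj]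
      by_cases h : 0 < t j
      · simp only [if_pos h, max_eq_left (le_of_lt h)]; ring
      · simp [if_neg h, max_eq_right (not_lt.1 h)]
    have h7 : b ⬝ᵥ π = π ⬝ᵥ b := dotProduct_comm _ _
    rw [h6, h7]; linarith
  calc b ⬝ᵥ ys.1 + u ⬝ᵥ ys.2.1 ≤ b ⬝ᵥ π + u ⬝ᵥ γ := hyopt _ hyfeas
    _ ≤ v + ε := le_of_lt hobj

lemma dual_extreme_span {m n : ℕ} (A : Matrix (Fin m) (Fin n) ℝ) (w : Fin n → ℝ)
    (ys : (Fin m → ℝ) × (Fin n → ℝ) × (Fin n → ℝ))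
    (hy_ep : ys ∈ Set.extremePoints ℝ (dualSet A w))
    (δ : Fin m → ℝ) (hδ : ∀ j, ys.2.1 j = 0 → ys.2.2 j = 0 → (Aᵀ *ᵥ δ) j = 0) :
    δ = 0 := by
  obtain ⟨hys, hext⟩ := hy_ep
  obtain ⟨hcon, hγ, hlam⟩ := hys
  by_contra hδ0
  set q : Fin n → ℝ := Aᵀ *ᵥ δ with hq
  set qγ : Fin n → ℝ := fun j => if 0 < ys.2.1 j then q j else 0 with hqγ
  set qlam : Fin n → ℝ := fun j => if 0 < ys.2.1 j then 0 else q j with hqlam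
  have hqsplit : ∀ j, q j = qγ j + qlam j := by
    intro j; by_cases h : 0 < ys.2.1 j <;> simp [hqγ, hqlam, h]
  have hpos : ∀ j : Fin n, ∃ tj > 0, tj * |qγ j| ≤ ys.2.1 j ∧ tj * |qlam j| ≤ ys.2.2 j := by
    intro j
    by_cases h1 : 0 < ys.2.1 j
    · have e1 : qγ j = q j := by simp [hqγ, h1]
      have e2 : qlam j = 0 := by simp [hqlam, h1]
      by_cases hq0 : q j = 0
      · exact ⟨1, one_pos, by simp [e1, e2, hq0, hγ j, hlam j]⟩
      · refine ⟨ys.2.1 j / |q j|, div_pos h1 (abs_pos.2 hq0), ?_, ?_⟩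
        · rw [e1, div_mul_cancel₀ _ (abs_ne_zero.2 hq0)]
        · simp [e2, hlam j]
    · have h1' : ys.2.1 j = 0 := le_antisymm (not_lt.1 h1) (hγ j)
      have e1 : qγ j = 0 := by simp [hqγ, h1]
      have e2 : qlam j = q j := by simp [hqlam, h1]
      by_cases hq0 : q j = 0
      · exact ⟨1, one_pos, by simp [e1, e2, hq0, hγ j, hlam j]⟩
      · have h2 : 0 < ys.2.2 j := by
          rcases lt_or_eq_of_le (hlam j) with h | h
          · exact h
          · exact absurd (hδ j h1' h.symm) hq0
        refine ⟨ys.2.2 j / |q j|, div_pos h2 (abs_pos.2 hq0), ?_, ?_⟩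
        · simp [e1, h1']
        · rw [e2, div_mul_cancel₀ _ (abs_ne_zero.2 hq0)]
  choose tf htfpos htf using hpos
  set t : ℝ := if hn : (Finset.univ : Finset (Fin n)).Nonempty
    then min 1 (Finset.univ.inf' hn tf) else 1 with htdef
  have ht_pos : 0 < t := by
    rw [htdef]
    split
    · next hn => exact lt_min one_pos ((Finset.lt_inf'_iff hn).2 fun j _ => htfpos j)
    · exact one_pos
  have ht_le : ∀ j, t ≤ tf j := by
    intro j
    have hn : (Finset.univ : Finset (Fin n)).Nonempty := ⟨j, Finset.mem_univ _⟩
    rw [htdef, dif_pos hn]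
    exact le_trans (min_le_right _ _) (Finset.inf'_le _ (Finset.mem_univ j))
  have hb1 : ∀ j, t * |qγ j| ≤ ys.2.1 j :=
    fun j => le_trans (mul_le_mul_of_nonneg_right (ht_le j) (abs_nonneg _)) (htf j).1
  have hb2 : ∀ j, t * |qlam j| ≤ ys.2.2 j :=
    fun j => le_trans (mul_le_mul_of_nonneg_right (ht_le j) (abs_nonneg _)) (htf j).2
  set y₁ : (Fin m → ℝ) × (Fin n → ℝ) × (Fin n → ℝ) :=
    (ys.1 + t • δ, ys.2.1 - t • qγ, ys.2.2 + t • qlam) with hy₁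
  set y₂ : (Fin m → ℝ) × (Fin n → ℝ) × (Fin n → ℝ) :=
    (ys.1 - t • δ, ys.2.1 + t • qγ, ys.2.2 - t • qlam) with hy₂
  have habs : ∀ (r s : ℝ), t * |s| ≤ r → (0 ≤ r - t * s ∧ 0 ≤ r + t * s) := by
    intro r s h
    have h1 : t * s ≤ t * |s| := mul_le_mul_of_nonneg_left (le_abs_self s) (le_of_lt ht_pos)
    have h2 : -(t * s) ≤ t * |s| := by
      rw [← mul_neg]; exact mul_le_mul_of_nonneg_left (neg_le_abs s) (le_of_lt ht_pos)
    constructor <;> linarith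
  have hmem₁ : y₁ ∈ dualSet A w := by
    refine ⟨?_, fun j => by simpa [hy₁] using (habs _ _ (hb1 j)).1,
      fun j => by simpa [hy₁] using (habs _ _ (hb2 j)).2⟩
    funext j
    have hc := congrFun hcon j
    simp only [Pi.add_apply, Pi.sub_apply, Pi.smul_apply, smul_eq_mul] at hc ⊢
    have hAδ : (Aᵀ *ᵥ (ys.1 + t • δ)) j = (Aᵀ *ᵥ ys.1) j + t * q j := by
      rw [mulVec_add, mulVec_smul]
      simp [smul_eq_mul, hq]
    rw [hAδ]
    have hts : t * q j = t * qγ j + t * qlam j := by rw [hqsplit j]; ring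
    have e1 : y₁.2.1 j = ys.2.1 j - t * qγ j := rfl
    have e2 : y₁.2.2 j = ys.2.2 j + t * qlam j := rfl
    linarith
  have hmem₂ : y₂ ∈ dualSet A w := by
    refine ⟨?_, fun j => by simpa [hy₂] using (habs _ _ (hb1 j)).2,
      fun j => by simpa [hy₂] using (habs _ _ (hb2 j)).1⟩
    funext j
    have hc := congrFun hcon j
    simp only [Pi.add_apply, Pi.sub_apply, Pi.smul_apply, smul_eq_mul] at hc ⊢
    have hAδ : (Aᵀ *ᵥ (ys.1 - t • δ)) j = (Aᵀ *ᵥ ys.1) j - t * q j := by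
      rw [mulVec_sub, mulVec_smul]
      simp [smul_eq_mul, hq]
    rw [hAδ]
    have hts : t * q j = t * qγ j + t * qlam j := by rw [hqsplit j]; ring
    have e1 : y₂.2.1 j = ys.2.1 j + t * qγ j := rfl
    have e2 : y₂.2.2 j = ys.2.2 j - t * qlam j := rfl
    linarith
  have hseg : ys ∈ openSegment ℝ y₁ y₂ := by
    refine ⟨1/2, 1/2, by norm_num, by norm_num, by norm_num, ?_⟩
    rw [hy₁, hy₂]
    refine Prod.ext ?_ (Prod.ext ?_ ?_)
    · show (1/2:ℝ)•(ys.1 + t•δ) + (1/2:ℝ)•(ys.1 - t•δ) = ys.1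
      module
    · show (1/2:ℝ)•(ys.2.1 - t•qγ) + (1/2:ℝ)•(ys.2.1 + t•qγ) = ys.2.1
      module
    · show (1/2:ℝ)•(ys.2.2 + t•qlam) + (1/2:ℝ)•(ys.2.2 - t•qlam) = ys.2.2
      module
  have := hext hmem₁ hmem₂ hseg
  have h1 : ys.1 + t • δ = ys.1 := congrArg Prod.fst this
  have h2 : t • δ = 0 := by
    have := add_left_cancel (a := ys.1) (b := t • δ) (c := 0) (by simpa using h1)
    exact this
  exact hδ0 (by simpa [smul_eq_zero, ne_of_gt ht_pos] using h2)

lemma exists_dual_basis {m n : ℕ} (A : Matrix (Fin m) (Fin n) ℝ) (w : Fin n → ℝ)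
    (ys : (Fin m → ℝ) × (Fin n → ℝ) × (Fin n → ℝ))
    (hy_ep : ys ∈ Set.extremePoints ℝ (dualSet A w)) :
    ∃ g : Fin m → Fin n, Function.Injective g ∧
      (∀ i, ys.2.1 (g i) = 0 ∧ ys.2.2 (g i) = 0) ∧
      (Aᵀ.submatrix g id).det ≠ 0 := by
  classical
  set S : Set (Fin m → ℝ) :=
    {v | ∃ j, ys.2.1 j = 0 ∧ ys.2.2 j = 0 ∧ v = fun i => A i j} with hS
  have hspan : Submodule.span ℝ S = ⊤ := by
    by_contra hne
    have hlt : Submodule.span ℝ S < ⊤ := lt_top_iff_ne_top.2 hne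
    obtain ⟨f, hf0, hmap⟩ :=
      Submodule.exists_dual_map_eq_bot_of_lt_top hlt inferInstance
    set δ : Fin m → ℝ := fun i => f (fun j' => if i = j' then (1:ℝ) else 0) with hδdef
    have hfeq : ∀ v : Fin m → ℝ, f v = ∑ i, v i * δ i := by
      intro v
      rw [LinearMap.pi_apply_eq_sum_univ f v]
      exact Finset.sum_congr rfl fun i _ => by rw [smul_eq_mul]
    have hδ : ∀ j, ys.2.1 j = 0 → ys.2.2 j = 0 → (Aᵀ *ᵥ δ) j = 0 := by
      intro j h1 h2
      have hmem : (fun i => A i j) ∈ Submodule.span ℝ S :=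
        Submodule.subset_span ⟨j, h1, h2, rfl⟩
      have : f (fun i => A i j) = 0 := by
        have := Submodule.mem_map_of_mem (f := f) hmem
        rw [hmap] at this
        simpa using this
      rw [hfeq] at this
      simpa [mulVec, dotProduct, transpose_apply] using this
    have hδ0 : δ = 0 := dual_extreme_span A w ys hy_ep δ hδ
    apply hf0
    apply LinearMap.ext
    intro v
    rw [hfeq, hδ0]
    simp
  obtain ⟨tset, hsub, hspan', hli⟩ := exists_linearIndependent ℝ S
  rw [hspan] at hspan'
  have hfin : tset.Finite := hli.setFinite
  haveI : Fintype tset := hfin.fintype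
  have hbtop : ⊤ ≤ Submodule.span ℝ (Set.range ((↑) : tset → (Fin m → ℝ))) := by
    rw [Subtype.range_coe, hspan']
  set bas : Module.Basis tset ℝ (Fin m → ℝ) := Module.Basis.mk hli hbtop with hbas
  have hcard : Fintype.card tset = m := by
    have h1 := Module.finrank_eq_card_basis bas
    have h2 : Module.finrank ℝ (Fin m → ℝ) = m := by
      simp [Module.finrank_pi]
    omega
  set e : Fin m ≃ tset := (Fintype.equivFinOfCardEq hcard).symm with he
  have hSmem : ∀ v : tset, ∃ j, ys.2.1 j = 0 ∧ ys.2.2 j = 0 ∧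
      (v : Fin m → ℝ) = fun i => A i j := fun v => hsub v.2
  choose jf hj1 hj2 hj3 using hSmem
  set g : Fin m → Fin n := fun i => jf (e i) with hg
  have hvec : ∀ v : tset, (v : Fin m → ℝ) = fun i => A i (jf v) := hj3
  have hginj : Function.Injective g := by
    intro i1 i2 h
    have : (e i1 : Fin m → ℝ) = (e i2 : Fin m → ℝ) := by
      rw [hvec (e i1), hvec (e i2)]
      rw [show jf (e i1) = jf (e i2) from h]
    exact e.injective (Subtype.coe_injective this)
  refine ⟨g, hginj, fun i => ⟨hj1 (e i), hj2 (e i)⟩, ?_⟩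
  have hrows : (fun i => (Aᵀ.submatrix g id) i) = fun i => ((e i : Fin m → ℝ)) := by
    funext i
    rw [hvec (e i)]
    funext k
    simp [submatrix_apply, transpose_apply, hg]
  have hli2 : LinearIndependent ℝ (fun i => (Aᵀ.submatrix g id) i) := by
    rw [hrows]
    exact hli.comp e e.injective
  have hunit : IsUnit (Aᵀ.submatrix g id) := linearIndependent_rows_iff_isUnit.1 hli2
  have := (isUnit_iff_isUnit_det _).1 hunit
  exact IsUnit.ne_zero this

/-- transfer to mathlib's TU and drop injectivity, over ℝ -/
lemma tu_real {m n : ℕ} (A : Matrix (Fin m) (Fin n) ℤ) (hTU : IsTotallyUnimodularMat A)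
    (k : ℕ) (f : Fin k → Fin m) (g : Fin k → Fin n) :
    ((A.map (fun z : ℤ => (z : ℝ))).submatrix f g).det = 0 ∨
    ((A.map (fun z : ℤ => (z : ℝ))).submatrix f g).det = 1 ∨
    ((A.map (fun z : ℤ => (z : ℝ))).submatrix f g).det = -1 := by
  have hTU' : A.IsTotallyUnimodular := by
    intro k' f' g' hf hg
    rcases hTU k' f' g' hf hg with h | h | h
    · exact ⟨0, by simp [h]⟩
    · exact ⟨1, by simp [h]⟩
    · exact ⟨-1, by simp [h]⟩
  rw [isTotallyUnimodular_iff] at hTU'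
  obtain ⟨s, hs⟩ := hTU' k f g
  have hdet : ((A.map (fun z : ℤ => (z : ℝ))).submatrix f g).det
      = (((A.submatrix f g).det : ℤ) : ℝ) := by
    rw [show (fun z : ℤ => (z : ℝ)) = ((Int.castRingHom ℝ : ℤ →+* ℝ) : ℤ → ℝ) from rfl,
      Matrix.submatrix_map]
    exact ((Int.castRingHom ℝ).map_det (A.submatrix f g)).symm
  rw [hdet, ← hs]
  cases s
  · left; simp
  · right; right; simp
  · right; left; simp

lemma abs_det_updateCol_le {m' : ℕ} (N : Matrix (Fin (m'+1)) (Fin (m'+1)) ℝ)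
    (i : Fin (m'+1)) (v : Fin (m'+1) → ℝ)
    (h : ∀ r : Fin (m'+1), |(N.submatrix r.succAbove i.succAbove).det| ≤ 1) :
    |(N.updateCol i v).det| ≤ ∑ k, |v k| := by
  rw [det_succ_column (N.updateCol i v) i]
  refine le_trans (Finset.abs_sum_le_sum_abs _ _) ?_
  refine Finset.sum_le_sum fun k _ => ?_
  have hminor : (N.updateCol i v).submatrix k.succAbove i.succAbove
      = N.submatrix k.succAbove i.succAbove := by
    ext a bcol
    simp [submatrix_apply, updateCol_apply, Fin.succAbove_ne i bcol]
  rw [hminor]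
  have hent : (N.updateCol i v) k i = v k := by simp [updateCol_apply]
  rw [hent, abs_mul, abs_mul, abs_pow, abs_neg, abs_one, one_pow, one_mul]
  calc |v k| * |(N.submatrix k.succAbove i.succAbove).det|
      ≤ |v k| * 1 := mul_le_mul_of_nonneg_left (h k) (abs_nonneg _)
    _ = |v k| := mul_one _

lemma solve_eq_cramer {k : ℕ} (M : Matrix (Fin k) (Fin k) ℝ) (hdet : M.det ≠ 0)
    (x v : Fin k → ℝ) (hx : M *ᵥ x = v) (i : Fin k) :
    x i = (M.det)⁻¹ * (M.updateCol i v).det := by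
  have hinj : Function.Injective M.mulVec :=
    mulVec_injective_iff_isUnit.2 ((isUnit_iff_isUnit_det M).2 (isUnit_iff_ne_zero.2 hdet))
  have h1 : M *ᵥ (cramer M v) = M.det • v := mulVec_cramer M v
  have h2 : M *ᵥ (M.det • x) = M.det • v := by rw [mulVec_smul, hx]
  have h3 : cramer M v = M.det • x := hinj (by rw [h1, h2])
  have h4 : cramer M v i = M.det * x i := by rw [h3]; simp [smul_eq_mul]
  rw [← cramer_apply, eq_comm]
  field_simp
  linarith [h4]

/-- Price rounding. If `A` is totally unimodular of rank `m ≥ 1`,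
`G > 2·m·d̄`, `x*` is a primal optimal extreme point and `(π*, γ*, λ*)` a dual optimal
extreme point of the weighted program `max (G·c + d)ᵀx`, then `x*` is a primal optimal
extreme point of `max cᵀx`, and the rounded prices `π̄ᵢ = ⌊π*ᵢ/G + 1/2⌋` form the π-part
of a dual optimal extreme point of `max cᵀx`. -/
theorem price_rounding
    (m n : ℕ) (hm : 1 ≤ m)
    (A : Matrix (Fin m) (Fin n) ℤ)
    (hTU : IsTotallyUnimodularMat A)
    (hrank : (A.map (fun z : ℤ => (z : ℝ))).rank = m)
    (c : Fin n → ℤ) (d u : Fin n → ℝ) (b : Fin m → ℝ)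
    (dbar : ℝ) (hdbar : IsGreatest (Set.range fun j => |d j|) dbar)
    (G : ℝ) (hG : 2 * (m : ℝ) * dbar < G)
    (xstar : Fin n → ℝ)
    (hx_ep : xstar ∈ Set.extremePoints ℝ
        (primalSet (A.map (fun z : ℤ => (z : ℝ))) b u))
    (hx_opt : ∀ x ∈ primalSet (A.map (fun z : ℤ => (z : ℝ))) b u,
        ∑ j, (G * (c j : ℝ) + d j) * x j ≤ ∑ j, (G * (c j : ℝ) + d j) * xstar j)
    (ystar : (Fin m → ℝ) × (Fin n → ℝ) × (Fin n → ℝ))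
    (hy_ep : ystar ∈ Set.extremePoints ℝ
        (dualSet (A.map (fun z : ℤ => (z : ℝ))) (fun j => G * (c j : ℝ) + d j)))
    (hy_opt : ∀ y ∈ dualSet (A.map (fun z : ℤ => (z : ℝ))) (fun j => G * (c j : ℝ) + d j),
        (∑ i, b i * ystar.1 i) + ∑ j, u j * ystar.2.1 j
          ≤ (∑ i, b i * y.1 i) + ∑ j, u j * y.2.1 j) :
    (xstar ∈ Set.extremePoints ℝ (primalSet (A.map (fun z : ℤ => (z : ℝ))) b u) ∧
      ∀ x ∈ primalSet (A.map (fun z : ℤ => (z : ℝ))) b u,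
        ∑ j, (c j : ℝ) * x j ≤ ∑ j, (c j : ℝ) * xstar j) ∧
    (∃ γ lam : Fin n → ℝ,
      ((fun i => ((⌊ystar.1 i / G + 1 / 2⌋ : ℤ) : ℝ)), γ, lam) ∈
        Set.extremePoints ℝ (dualSet (A.map (fun z : ℤ => (z : ℝ))) (fun j => (c j : ℝ))) ∧
      ∀ y ∈ dualSet (A.map (fun z : ℤ => (z : ℝ))) (fun j => (c j : ℝ)),
        (∑ i, b i * ((⌊ystar.1 i / G + 1 / 2⌋ : ℤ) : ℝ)) + ∑ j, u j * γ j
          ≤ (∑ i, b i * y.1 i) + ∑ j, u j * y.2.1 j) := by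
  classical
  obtain ⟨m', rfl⟩ : ∃ m', m = m' + 1 := ⟨m - 1, (Nat.succ_pred_eq_of_pos hm).symm⟩
  set AR : Matrix (Fin (m'+1)) (Fin n) ℝ := A.map (fun z : ℤ => (z : ℝ)) with hARdef
  set w : Fin n → ℝ := fun j => G * (c j : ℝ) + d j with hwdef
  -- basic facts
  have hdbar_le : ∀ j, |d j| ≤ dbar := fun j => hdbar.2 ⟨j, rfl⟩
  have hdbar0 : 0 ≤ dbar := by
    obtain ⟨j₀, hj₀⟩ := hdbar.1
    rw [← hj₀]; positivity
  have hm1 : (1:ℝ) ≤ ((m'+1 : ℕ) : ℝ) := by exact_mod_cast Nat.one_le_iff_ne_zero.2 (by omega)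
  have hG0 : 0 < G := lt_of_le_of_lt (by positivity) hG
  have hu0 : ∀ j, 0 ≤ u j := fun j => le_trans (hx_ep.1.2 j).1 (hx_ep.1.2 j).2
  -- optimality in dot-product form
  have hxopt' : ∀ x ∈ primalSet AR b u, w ⬝ᵥ x ≤ w ⬝ᵥ xstar := fun x hx => hx_opt x hx
  have hyopt' : ∀ y ∈ dualSet AR w,
      b ⬝ᵥ ystar.1 + u ⬝ᵥ ystar.2.1 ≤ b ⬝ᵥ y.1 + u ⬝ᵥ y.2.1 := fun y hy => hy_opt y hy
  -- strong duality for the weighted program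
  have hwd := weak_duality AR b u w xstar ystar hx_ep.1 hy_ep.1
  have hsd := dual_le_primal AR b u w xstar ystar hx_ep.1 hxopt' hyopt'
  have heq : b ⬝ᵥ ystar.1 + u ⬝ᵥ ystar.2.1 = w ⬝ᵥ xstar := le_antisymm hsd hwd
  -- complementary slackness for the weighted pair
  have hCS : ∀ j, ystar.2.1 j * (u j - xstar j) = 0 ∧ ystar.2.2 j * xstar j = 0 := by
    have hexp : w ⬝ᵥ xstar = b ⬝ᵥ ystar.1 + ystar.2.1 ⬝ᵥ xstar - ystar.2.2 ⬝ᵥ xstar := by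
      rw [← hy_ep.1.1]
      have h1 : (ARᵀ *ᵥ ystar.1 + ystar.2.1 - ystar.2.2) ⬝ᵥ xstar
          = (ARᵀ *ᵥ ystar.1) ⬝ᵥ xstar + ystar.2.1 ⬝ᵥ xstar - ystar.2.2 ⬝ᵥ xstar := by
        rw [sub_dotProduct, add_dotProduct]
      rw [h1]
      have h2 : (ARᵀ *ᵥ ystar.1) ⬝ᵥ xstar = ystar.1 ⬝ᵥ (AR *ᵥ xstar) := by
        rw [mulVec_transpose, ← dotProduct_mulVec]
      rw [h2, hx_ep.1.1, dotProduct_comm]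
    have hsum : ∑ j, (ystar.2.1 j * (u j - xstar j) + ystar.2.2 j * xstar j) = 0 := by
      have h3 : u ⬝ᵥ ystar.2.1 - ystar.2.1 ⬝ᵥ xstar + ystar.2.2 ⬝ᵥ xstar = 0 := by
        rw [hexp] at heq; linarith
      rw [← h3]
      simp only [dotProduct, ← Finset.sum_sub_distrib, ← Finset.sum_add_distrib]
      exact Finset.sum_congr rfl fun j _ => by ring
    have hnn : ∀ j ∈ Finset.univ,
        0 ≤ ystar.2.1 j * (u j - xstar j) + ystar.2.2 j * xstar j := fun j _ =>
      add_nonneg (mul_nonneg (hy_ep.1.2.1 j) (by linarith [(hx_ep.1.2 j).2]))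
        (mul_nonneg (hy_ep.1.2.2 j) (hx_ep.1.2 j).1)
    intro j
    have h0 := (Finset.sum_eq_zero_iff_of_nonneg hnn).1 hsum j (Finset.mem_univ j)
    have ha : 0 ≤ ystar.2.1 j * (u j - xstar j) :=
      mul_nonneg (hy_ep.1.2.1 j) (by linarith [(hx_ep.1.2 j).2])
    have hb : 0 ≤ ystar.2.2 j * xstar j := mul_nonneg (hy_ep.1.2.2 j) (hx_ep.1.2 j).1
    constructor <;> linarith
  -- dual basis
  obtain ⟨g, hginj, hgslack, hgdet⟩ := exists_dual_basis AR w ystar hy_ep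
  set MR : Matrix (Fin (m'+1)) (Fin (m'+1)) ℝ := ARᵀ.submatrix g id with hMRdef
  have hMRdet : MR.det ≠ 0 := hgdet
  -- determinant of MR is ±1
  have habs1 : ∀ {k : ℕ} (q : Fin k → Fin (m'+1)) (p : Fin k → Fin n),
      |(AR.submatrix q p).det| ≤ 1 := by
    intro k q p
    rcases tu_real A hTU k q p with h | h | h <;> rw [hARdef, h] <;> norm_num
  have hMRdet_eq : MR.det = (AR.submatrix id g).det := by
    rw [← det_transpose (AR.submatrix id g), transpose_submatrix]
  have hMRabs : |MR.det| = 1 := by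
    rw [hMRdet_eq]
    rcases tu_real A hTU (m'+1) id g with h | h | h <;> rw [hARdef] at *
    · exact absurd (hMRdet_eq.trans h) hMRdet
    · rw [h]; norm_num
    · rw [h]; norm_num
  -- integer basis matrix
  set Mz : Matrix (Fin (m'+1)) (Fin (m'+1)) ℤ := Aᵀ.submatrix g id with hMzdef
  have hMRMz : ∀ i k, MR i k = ((Mz i k : ℤ) : ℝ) := fun i k => rfl
  have hMzdet : MR.det = ((Mz.det : ℤ) : ℝ) := by
    have : MR = Mz.map (fun z : ℤ => (z : ℝ)) := by
      ext i k; exact hMRMz i k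
    rw [this, show (fun z : ℤ => (z : ℝ)) = ((Int.castRingHom ℝ) : ℤ → ℝ) from rfl]
    exact ((Int.castRingHom ℝ).map_det Mz).symm
  have hMzdet2 : Mz.det * Mz.det = 1 := by
    have h1 : |((Mz.det : ℤ) : ℝ)| = 1 := by rw [← hMzdet]; exact hMRabs
    have h2 : Mz.det = 1 ∨ Mz.det = -1 := by
      rcases (abs_eq (by norm_num : (0:ℝ) ≤ 1)).1 h1 with h | h
      · left; exact_mod_cast h
      · right; exact_mod_cast h
    rcases h2 with h | h <;> rw [h] <;> ring
  -- integral prices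
  set cg : Fin (m'+1) → ℤ := fun i => c (g i) with hcgdef
  set pibar : Fin (m'+1) → ℤ := Mz.det • (Mz.cramer cg) with hpibardef
  have hMzpibar : Mz *ᵥ pibar = cg := by
    rw [hpibardef, mulVec_smul, mulVec_cramer]
    funext i
    simp only [Pi.smul_apply, smul_eq_mul]
    rw [← mul_assoc, hMzdet2, one_mul]
  set pibarR : Fin (m'+1) → ℝ := fun i => ((pibar i : ℤ) : ℝ) with hpibarRdef
  have hMRpibar : MR *ᵥ pibarR = fun i => ((cg i : ℤ) : ℝ) := by
    funext i
    have := congrFun hMzpibar i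
    simp only [mulVec, dotProduct] at this ⊢
    rw [← this]
    push_cast
    rfl
  -- the vector ε
  set ε : Fin (m'+1) → ℝ := ystar.1 - G • pibarR with hεdef
  have hystar1 : ∀ i, ystar.1 i = G * pibarR i + ε i := by
    intro i; simp only [hεdef, Pi.sub_apply, Pi.smul_apply, smul_eq_mul]; ring
  have hMRys : MR *ᵥ ystar.1 = fun i => w (g i) := by
    funext i
    have hc := congrFun hy_ep.1.1 (g i)
    simp only [Pi.add_apply, Pi.sub_apply] at hc
    rw [(hgslack i).1, (hgslack i).2] at hc
    have : (MR *ᵥ ystar.1) i = (ARᵀ *ᵥ ystar.1) (g i) := rfl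
    rw [this]; linarith
  have hMε : MR *ᵥ ε = fun i => d (g i) := by
    funext i
    rw [hεdef, mulVec_sub, mulVec_smul]
    have h1 := congrFun hMRys i
    have h2 := congrFun hMRpibar i
    simp only [Pi.sub_apply, Pi.smul_apply, smul_eq_mul]
    rw [h1, h2, hwdef]
    simp [hcgdef]
  -- bound on ε
  have hεbound : ∀ i, |ε i| ≤ ((m'+1 : ℕ) : ℝ) * dbar := by
    intro i
    have h1 := solve_eq_cramer MR hMRdet ε (fun k => d (g k)) hMε i
    have h2 : ∀ r : Fin (m'+1), |(MR.submatrix r.succAbove i.succAbove).det| ≤ 1 := by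
      intro r
      have : (MR.submatrix r.succAbove i.succAbove).det
          = (AR.submatrix i.succAbove (g ∘ r.succAbove)).det := by
        rw [← det_transpose (AR.submatrix i.succAbove (g ∘ r.succAbove)), transpose_submatrix]
        rfl
      rw [this]
      exact habs1 _ _
    have h3 := abs_det_updateCol_le MR i (fun k => d (g k)) h2
    rw [h1, abs_mul, abs_inv, hMRabs]
    simp only [inv_one, one_mul]
    calc |(MR.updateCol i fun k => d (g k)).det| ≤ ∑ k, |d (g k)| := h3
      _ ≤ ∑ _k : Fin (m'+1), dbar := Finset.sum_le_sum fun k _ => hdbar_le (g k)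
      _ = ((m'+1 : ℕ) : ℝ) * dbar := by simp [Finset.sum_const, nsmul_eq_mul]
  -- rounding identity
  have hεG : ∀ i, |ε i| < G / 2 := by
    intro i
    refine lt_of_le_of_lt (hεbound i) ?_
    have : (2:ℝ) * ((m'+1:ℕ) : ℝ) * dbar < G := by exact_mod_cast hG
    linarith
  have hround : ∀ i, (⌊ystar.1 i / G + 1 / 2⌋ : ℤ) = pibar i := by
    intro i
    have hdiv : ystar.1 i / G = pibarR i + ε i / G := by
      rw [hystar1 i, add_div, mul_div_cancel_left₀ _ hG0.ne']
    rw [hdiv]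
    have h1 : |ε i| < G / 2 := hεG i
    have h2 : ε i / G < 1/2 := by
      rw [div_lt_iff₀ hG0]; rw [abs_lt] at h1; linarith
    have h3 : -(1/2) < ε i / G := by
      rw [lt_div_iff₀ hG0]; rw [abs_lt] at h1; linarith
    rw [Int.floor_eq_iff]
    constructor
    · have hpR : pibarR i = ((pibar i : ℤ) : ℝ) := rfl
      rw [← hpR]; linarith
    · have hpR : pibarR i = ((pibar i : ℤ) : ℝ) := rfl
      rw [← hpR]; push_cast; linarith
  -- integer reduced costs
  set N : Fin n → ℤ := Aᵀ *ᵥ pibar with hNdef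
  set R : Fin n → ℤ := fun j => c j - N j with hRdef
  have hARpibar : ∀ j, (ARᵀ *ᵥ pibarR) j = ((N j : ℤ) : ℝ) := by
    intro j
    simp only [mulVec, dotProduct, hNdef, transpose_apply]
    push_cast
    rfl
  have hbasisR : ∀ i, R (g i) = 0 := by
    intro i
    have h1 : N (g i) = (Mz *ᵥ pibar) i := rfl
    have h2 := congrFun hMzpibar i
    simp only [hRdef]
    rw [h1, h2, hcgdef]
    ring
  -- column bound
  have hcol : ∀ j, |(fun kk => AR kk j) ⬝ᵥ ε| ≤ ((m'+1:ℕ):ℝ) * dbar := by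
    intro j
    set aj : Fin (m'+1) → ℝ := fun kk => AR kk j with hajdef
    set z : Fin (m'+1) → ℝ := MRᵀ.cramer aj with hzdef
    have hz : MRᵀ *ᵥ z = MRᵀ.det • aj := mulVec_cramer MRᵀ aj
    have hzk : ∀ k, |z k| ≤ 1 := by
      intro k
      have h1 : z k = (MRᵀ.updateCol k aj).det := by rw [hzdef, cramer_apply]
      have h2 : MRᵀ.updateCol k aj = AR.submatrix id (Function.update g k j) := by
        ext a bcol
        rw [updateCol_apply]
        by_cases h : bcol = k
        · simp [h, hajdef, Function.update_apply]
        · simp only [if_neg h, submatrix_apply, Function.update_apply, id]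
          rfl
      rw [h1, h2]
      exact habs1 _ _
    have hdet_mul : MR.det * (aj ⬝ᵥ ε) = ∑ k, z k * d (g k) := by
      have h1 : (MRᵀ *ᵥ z) ⬝ᵥ ε = z ⬝ᵥ (MR *ᵥ ε) := by
        rw [mulVec_transpose, ← dotProduct_mulVec]
      calc MR.det * (aj ⬝ᵥ ε) = (MRᵀ.det • aj) ⬝ᵥ ε := by
            rw [det_transpose, smul_dotProduct]; rfl
        _ = (MRᵀ *ᵥ z) ⬝ᵥ ε := by rw [hz]
        _ = z ⬝ᵥ (MR *ᵥ ε) := h1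
        _ = ∑ k, z k * d (g k) := by rw [hMε]; rfl
    calc |aj ⬝ᵥ ε| = |MR.det| * |aj ⬝ᵥ ε| := by rw [hMRabs, one_mul]
      _ = |MR.det * (aj ⬝ᵥ ε)| := (abs_mul _ _).symm
      _ = |∑ k, z k * d (g k)| := by rw [hdet_mul]
      _ ≤ ∑ k, |z k * d (g k)| := Finset.abs_sum_le_sum_abs _ _
      _ ≤ ∑ _k : Fin (m'+1), dbar := Finset.sum_le_sum (fun k _ => by
            rw [abs_mul]
            calc |z k| * |d (g k)| ≤ 1 * dbar :=
                  mul_le_mul (hzk k) (hdbar_le _) (abs_nonneg _) zero_le_one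
              _ = dbar := one_mul _)
      _ = ((m'+1:ℕ):ℝ) * dbar := by simp [Finset.sum_const, nsmul_eq_mul]
  -- reduced-cost identity
  have hkey : ∀ j, ystar.2.1 j - ystar.2.2 j
      = G * ((R j : ℤ) : ℝ) + (d j - (fun kk => AR kk j) ⬝ᵥ ε) := by
    intro j
    have hc := congrFun hy_ep.1.1 j
    simp only [Pi.add_apply, Pi.sub_apply] at hc
    have hy1 : ystar.1 = G • pibarR + ε := by
      funext i
      simp only [Pi.add_apply, Pi.smul_apply, smul_eq_mul]
      exact hystar1 i
    have h1 : (ARᵀ *ᵥ ystar.1) j = G * ((N j:ℤ):ℝ) + (fun kk => AR kk j) ⬝ᵥ ε := by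
      rw [hy1, mulVec_add, mulVec_smul]
      have h2 : (ARᵀ *ᵥ ε) j = (fun kk => AR kk j) ⬝ᵥ ε := rfl
      simp only [Pi.add_apply, Pi.smul_apply, smul_eq_mul]
      rw [hARpibar j, h2]
    rw [h1] at hc
    have hR : ((R j:ℤ):ℝ) = (c j : ℝ) - ((N j:ℤ):ℝ) := by
      simp only [hRdef]; push_cast; ring
    have hwj : w j = G * (c j:ℝ) + d j := rfl
    have hexp2 : G * ((c j:ℝ) - ((N j:ℤ):ℝ)) = G*(c j:ℝ) - G*((N j:ℤ):ℝ) := by ring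
    rw [hR, hexp2]
    rw [hwj] at hc
    linarith
  -- big reduced costs force tight primal bounds
  have hprod : dbar ≤ ((m'+1:ℕ):ℝ) * dbar := by nlinarith
  have hG' : 2*((m'+1:ℕ):ℝ)*dbar < G := by exact_mod_cast hG
  have hbig : ∀ j, 1 ≤ R j → 0 < ystar.2.1 j := by
    intro j hR1
    have h1 : (1:ℝ) ≤ ((R j:ℤ):ℝ) := by exact_mod_cast hR1
    have h2 := hkey j
    have habs2 := abs_le.1 (hcol j)
    have hd := abs_le.1 (hdbar_le j)
    have hstep : G ≤ G * ((R j:ℤ):ℝ) := by nlinarith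
    have hlam := hy_ep.1.2.2 j
    linarith [habs2.1, habs2.2, hd.1, hd.2]
  have hsmall : ∀ j, R j ≤ -1 → 0 < ystar.2.2 j := by
    intro j hR1
    have h1 : ((R j:ℤ):ℝ) ≤ -1 := by exact_mod_cast hR1
    have h2 := hkey j
    have habs2 := abs_le.1 (hcol j)
    have hd := abs_le.1 (hdbar_le j)
    have hstep : G * ((R j:ℤ):ℝ) ≤ -G := by nlinarith
    have hgam := hy_ep.1.2.1 j
    linarith [habs2.1, habs2.2, hd.1, hd.2]
  have hxu : ∀ j, 1 ≤ R j → xstar j = u j := by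
    intro j hR1
    have h0 := (hCS j).1
    rcases mul_eq_zero.1 h0 with h | h
    · exact absurd h (ne_of_gt (hbig j hR1))
    · linarith
  have hx0 : ∀ j, R j ≤ -1 → xstar j = 0 := by
    intro j hR1
    have h0 := (hCS j).2
    rcases mul_eq_zero.1 h0 with h | h
    · exact absurd h (ne_of_gt (hsmall j hR1))
    · exact h
  -- the rounded dual solution
  set cv : Fin n → ℝ := fun j => (c j : ℝ) with hcvdef
  set gbar : Fin n → ℝ := fun j => max ((R j:ℤ):ℝ) 0 with hgbardef
  set lbar : Fin n → ℝ := fun j => max (-((R j:ℤ):ℝ)) 0 with hlbardef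
  have hARpibar_c : ∀ j, (ARᵀ *ᵥ pibarR) j = cv j - ((R j:ℤ):ℝ) := by
    intro j
    rw [hARpibar j]
    have : ((R j:ℤ):ℝ) = (c j : ℝ) - ((N j:ℤ):ℝ) := by
      simp only [hRdef]; push_cast; ring
    rw [this, hcvdef]
    ring
  have hybar_feas : (pibarR, gbar, lbar) ∈ dualSet AR cv := by
    refine ⟨?_, fun j => le_max_right _ _, fun j => le_max_right _ _⟩
    funext j
    simp only [Pi.add_apply, Pi.sub_apply]
    have h1 : gbar j - lbar j = ((R j:ℤ):ℝ) := max_zero_sub_max_neg_zero_eq_self _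
    rw [hARpibar_c j]
    linarith
  -- value of the rounded dual solution
  have hval : b ⬝ᵥ pibarR + u ⬝ᵥ gbar = cv ⬝ᵥ xstar := by
    have hexp : cv ⬝ᵥ xstar = b ⬝ᵥ pibarR + gbar ⬝ᵥ xstar - lbar ⬝ᵥ xstar := by
      rw [← hybar_feas.1]
      have h1 : (ARᵀ *ᵥ pibarR + gbar - lbar) ⬝ᵥ xstar
          = (ARᵀ *ᵥ pibarR) ⬝ᵥ xstar + gbar ⬝ᵥ xstar - lbar ⬝ᵥ xstar := by
        rw [sub_dotProduct, add_dotProduct]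
      rw [h1]
      have h2 : (ARᵀ *ᵥ pibarR) ⬝ᵥ xstar = pibarR ⬝ᵥ (AR *ᵥ xstar) := by
        rw [mulVec_transpose, ← dotProduct_mulVec]
      rw [h2, hx_ep.1.1, dotProduct_comm]
    have hterm : ∀ j, gbar j * xstar j - lbar j * xstar j = u j * gbar j := by
      intro j
      rcases lt_trichotomy (R j) 0 with h | h | h
      · have hR1 : R j ≤ -1 := by omega
        have hx0j := hx0 j hR1
        have hg0 : gbar j = 0 := by
          rw [hgbardef]
          apply max_eq_right
          exact_mod_cast h.le
        rw [hx0j, hg0]; ring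
      · have hg0 : gbar j = 0 := by rw [hgbardef]; simp [h]
        have hl0 : lbar j = 0 := by rw [hlbardef]; simp [h]
        rw [hg0, hl0]; ring
      · have hR1 : 1 ≤ R j := h
        have hxuj := hxu j hR1
        have hl0 : lbar j = 0 := by
          rw [hlbardef]
          apply max_eq_right
          simp only [neg_nonpos]
          exact_mod_cast h.le
        rw [hxuj, hl0]; ring
    have hsum : gbar ⬝ᵥ xstar - lbar ⬝ᵥ xstar = u ⬝ᵥ gbar := by
      simp only [dotProduct, ← Finset.sum_sub_distrib]
      exact Finset.sum_congr rfl fun j _ => hterm j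
    rw [hexp]; linarith
  -- injectivity of MR
  have hMRinj : Function.Injective MR.mulVec :=
    mulVec_injective_iff_isUnit.2 ((isUnit_iff_isUnit_det MR).2 (isUnit_iff_ne_zero.2 hMRdet))
  -- slacks vanish on the basis
  have hgbar_g : ∀ i, gbar (g i) = 0 ∧ lbar (g i) = 0 := by
    intro i
    have h0 : ((R (g i):ℤ):ℝ) = 0 := by rw [hbasisR i]; simp
    constructor
    · rw [hgbardef]; simp [h0]
    · rw [hlbardef]; simp [h0]
  have hMRpibar_c : MR *ᵥ pibarR = fun i => cv (g i) := by
    rw [hMRpibar]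
  -- extreme point
  have hext_bar : (pibarR, gbar, lbar) ∈ Set.extremePoints ℝ (dualSet AR cv) := by
    refine ⟨hybar_feas, ?_⟩
    rintro y1 h1 y2 h2 ⟨a, a2, ha, ha2, haa, hsum2⟩
    have hpieq : a • y1.1 + a2 • y2.1 = pibarR := congrArg Prod.fst hsum2
    have hgeq : a • y1.2.1 + a2 • y2.2.1 = gbar := congrArg (fun p => p.2.1) hsum2
    have hleq : a • y1.2.2 + a2 • y2.2.2 = lbar := congrArg (fun p => p.2.2) hsum2
    have hzero : ∀ (p q r : ℝ), 0 ≤ p → 0 ≤ q → a * p + a2 * q = r → r = 0 →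
        p = 0 ∧ q = 0 := by
      intro p q r hp hq h hr
      constructor <;> nlinarith
    have hzg1x : ∀ j, gbar j = 0 → y1.2.1 j = 0 := fun j hj =>
      (hzero _ _ _ (h1.2.1 j) (h2.2.1 j) (congrFun hgeq j) hj).1
    have hzg2x : ∀ j, gbar j = 0 → y2.2.1 j = 0 := fun j hj =>
      (hzero _ _ _ (h1.2.1 j) (h2.2.1 j) (congrFun hgeq j) hj).2
    have hzl1x : ∀ j, lbar j = 0 → y1.2.2 j = 0 := fun j hj =>
      (hzero _ _ _ (h1.2.2 j) (h2.2.2 j) (congrFun hleq j) hj).1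
    have hzl2x : ∀ j, lbar j = 0 → y2.2.2 j = 0 := fun j hj =>
      (hzero _ _ _ (h1.2.2 j) (h2.2.2 j) (congrFun hleq j) hj).2
    have hpin : ∀ yy : (Fin (m'+1) → ℝ) × (Fin n → ℝ) × (Fin n → ℝ), yy ∈ dualSet AR cv →
        (∀ j, gbar j = 0 → yy.2.1 j = 0) → (∀ j, lbar j = 0 → yy.2.2 j = 0) →
        yy = (pibarR, gbar, lbar) := by
      intro yy hyy hzg hzl
      have hy1 : yy.1 = pibarR := by
        apply hMRinj
        rw [hMRpibar_c]
        funext i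
        have hc1 := congrFun hyy.1 (g i)
        simp only [Pi.add_apply, Pi.sub_apply] at hc1
        have e1 : yy.2.1 (g i) = 0 := hzg _ (hgbar_g i).1
        have e2 : yy.2.2 (g i) = 0 := hzl _ (hgbar_g i).2
        rw [e1, e2] at hc1
        have e3 : (MR *ᵥ yy.1) i = (ARᵀ *ᵥ yy.1) (g i) := rfl
        rw [e3]
        linarith
      have hdiff : ∀ j, yy.2.1 j - yy.2.2 j = gbar j - lbar j := by
        intro j
        have hc1 := congrFun hyy.1 j
        have hc2 := congrFun hybar_feas.1 j
        rw [hy1] at hc1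
        simp only [Pi.add_apply, Pi.sub_apply] at hc1 hc2
        linarith
      refine Prod.ext hy1 (Prod.ext ?_ ?_)
      · funext j
        show yy.2.1 j = gbar j
        rcases le_or_gt ((R j:ℤ):ℝ) 0 with h | h
        · have hg0 : gbar j = 0 := by rw [hgbardef]; exact max_eq_right h
          rw [hzg j hg0, hg0]
        · have hl0 : lbar j = 0 := by
            rw [hlbardef]; exact max_eq_right (by linarith)
          have := hdiff j
          rw [hzl j hl0, hl0] at this
          linarith
      · funext j
        show yy.2.2 j = lbar j
        rcases le_or_gt ((R j:ℤ):ℝ) 0 with h | h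
        · have hg0 : gbar j = 0 := by rw [hgbardef]; exact max_eq_right h
          have := hdiff j
          rw [hzg j hg0, hg0] at this
          linarith
        · have hl0 : lbar j = 0 := by
            rw [hlbardef]; exact max_eq_right (by linarith)
          rw [hzl j hl0, hl0]
    exact hpin y1 h1 hzg1x hzl1x
  -- final packaging
  have hfl : ∀ i, ((⌊ystar.1 i / G + 1 / 2⌋ : ℤ) : ℝ) = pibarR i := by
    intro i
    rw [hround i]
  have hflsum : (∑ i, b i * ((⌊ystar.1 i / G + 1 / 2⌋ : ℤ) : ℝ)) = b ⬝ᵥ pibarR := by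
    exact Finset.sum_congr rfl fun i _ => by rw [hfl i]
  have hflfun : (fun i => ((⌊ystar.1 i / G + 1 / 2⌋ : ℤ) : ℝ)) = pibarR :=
    funext fun i => hfl i
  refine ⟨⟨hx_ep, ?_⟩, gbar, lbar, ?_, ?_⟩
  · intro x hx
    have h1 : cv ⬝ᵥ x ≤ b ⬝ᵥ pibarR + u ⬝ᵥ gbar :=
      weak_duality AR b u cv x (pibarR, gbar, lbar) hx hybar_feas
    have h2 : cv ⬝ᵥ x ≤ cv ⬝ᵥ xstar := by rw [← hval]; exact h1
    exact h2
  · rw [hflfun]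
    exact hext_bar
  · intro y hy
    have h1 : cv ⬝ᵥ xstar ≤ b ⬝ᵥ y.1 + u ⬝ᵥ y.2.1 :=
      weak_duality AR b u cv xstar y hx_ep.1 hy
    have h2 : (∑ i, b i * ((⌊ystar.1 i / G + 1 / 2⌋ : ℤ) : ℝ)) + ∑ j, u j * gbar j
        = b ⬝ᵥ pibarR + u ⬝ᵥ gbar := by
      rw [hflsum]; rfl
    rw [h2, hval]
    exact h1
end

section
/- The bound G > d̄·(1 + m) in the weighted objective theorem is tight: there exist m, n ≥ 1, an m × n unimodular integer matrix A of rank m, vectors c ∈ ℤⁿ, d, u ∈ ℝⁿ, b ∈ ℝᵐ with d̄ = max_i |d_i| > 0, the scaling factor G = d̄·(1 + m), a basis B (a set of m column indices with A_B invertible), and an optimal solution x* of max {(G·c + d)ᵀx | A x = b, 0 ≤ x ≤ u} with x*_j ∈ {0, u_j} for all j ∉ B, such that the conclusion of the weighted objective theorem fails: either x* does not maximize dᵀx among the maximizers of cᵀx over {x | A x = b, 0 ≤ x ≤ u}, or π with πᵀ = c_Bᵀ (A_B)⁻¹ is not optimal for the dual of max {cᵀx | A x = b, 0 ≤ x ≤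 u}. -/
open Matrix

/-- An `m × n` integer matrix of rank `m` is unimodular if every `m × m` nonsingular
submatrix has determinant `±1`. -/
def IsUnimodularMat {m n : ℕ} (A : Matrix (Fin m) (Fin n) ℤ) : Prop :=
  ∀ g : Fin m → Fin n, Function.Injective g →
    (A.submatrix id g).det ≠ 0 →
      (A.submatrix id g).det = 1 ∨ (A.submatrix id g).det = -1

/-- The bound `G > d̄·(1 + m)` in the weighted objective theorem is tight:
with `G = d̄·(1 + m)` there is an instance (a unimodular full-rank matrix, data, an
optimal basis `B`, and a basic optimal solution `x*` of the weighted program) for which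
the conclusion of the weighted objective theorem fails. -/
theorem weighted_objective_theorem_bound_tight :
    ∃ (m n : ℕ), 1 ≤ m ∧ 1 ≤ n ∧
    ∃ (A : Matrix (Fin m) (Fin n) ℤ)
      (c : Fin n → ℤ) (d u : Fin n → ℝ) (b : Fin m → ℝ)
      (dbar G : ℝ)
      (β : Fin m → Fin n) (xstar : Fin n → ℝ),
      IsUnimodularMat A ∧
      (A.map (fun z : ℤ => (z : ℝ))).rank = m ∧
      IsGreatest (Set.range fun j => |d j|) dbar ∧
      0 < dbar ∧
      G = dbar * (1 + (m : ℝ)) ∧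
      Function.Injective β ∧
      IsUnit ((A.map (fun z : ℤ => (z : ℝ))).submatrix id β).det ∧
      xstar ∈ primalSet (A.map (fun z : ℤ => (z : ℝ))) b u ∧
      (∀ x ∈ primalSet (A.map (fun z : ℤ => (z : ℝ))) b u,
        ∑ j, (G * (c j : ℝ) + d j) * x j ≤ ∑ j, (G * (c j : ℝ) + d j) * xstar j) ∧
      (∀ j : Fin n, (∀ k : Fin m, β k ≠ j) → xstar j = 0 ∨ xstar j = u j) ∧
      (¬ (∀ x ∈ primalSet (A.map (fun z : ℤ => (z : ℝ))) b u,
            (∀ x' ∈ primalSet (A.map (fun z : ℤ => (z : ℝ))) b u,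
              ∑ j, (c j : ℝ) * x' j ≤ ∑ j, (c j : ℝ) * x j) →
            ∑ j, d j * x j ≤ ∑ j, d j * xstar j) ∨
       ¬ (∃ γ lam : Fin n → ℝ,
            (∀ j, 0 ≤ γ j) ∧ (∀ j, 0 ≤ lam j) ∧
            (A.map (fun z : ℤ => (z : ℝ)))ᵀ.mulVec
                (Matrix.vecMul (fun k => (c (β k) : ℝ))
                  ((A.map (fun z : ℤ => (z : ℝ))).submatrix id β)⁻¹) + γ - lam
              = (fun j => (c j : ℝ)) ∧
            IsGreatest ((fun x => ∑ j, (c j : ℝ) * x j) ''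
                primalSet (A.map (fun z : ℤ => (z : ℝ))) b u)
              ((∑ i, b i * Matrix.vecMul (fun k => (c (β k) : ℝ))
                  ((A.map (fun z : ℤ => (z : ℝ))).submatrix id β)⁻¹ i) +
                ∑ j, u j * γ j))) := by
  refine ⟨1, 2, le_refl 1, by norm_num, !![1,1], ![0,1], ![1,-1], ![1,2], ![1],
    1, 2, (fun _ => 0), ![1,0], ?_, ?_, ?_, one_pos, by norm_num,
    ?_, ?_, ?_, ?_, ?_, ?_⟩
  · -- unimodular
    intro g hg _
    left
    rw [Matrix.det_fin_one]
    simp only [Matrix.submatrix_apply, id]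
    have hall : ∀ j : Fin 2, (!![1,1] : Matrix (Fin 1) (Fin 2) ℤ) 0 j = 1 := by
      intro j; fin_cases j <;> rfl
    exact hall (g 0)
  · -- rank
    have hr : LinearMap.range ((!![1,1] : Matrix (Fin 1) (Fin 2) ℤ).map
        (fun z : ℤ => (z : ℝ))).mulVecLin = ⊤ := by
      rw [LinearMap.range_eq_top]
      intro y
      refine ⟨![y 0, 0], ?_⟩
      funext i
      fin_cases i
      simp [Matrix.mulVecLin, Matrix.mulVec, dotProduct, Fin.sum_univ_two,
        Matrix.map_apply]
    rw [Matrix.rank, hr, finrank_top]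
    simp
  · -- IsGreatest of |d|
    constructor
    · exact ⟨0, by norm_num⟩
    · rintro y ⟨j, rfl⟩
      fin_cases j <;> norm_num
  · -- β injective
    intro a b _
    exact Subsingleton.elim a b
  · -- IsUnit det
    rw [Matrix.det_fin_one]
    simp [Matrix.submatrix_apply, Matrix.map_apply]
  · -- xstar ∈ primalSet
    constructor
    · funext i
      fin_cases i
      simp [Matrix.mulVec, dotProduct, Fin.sum_univ_two, Matrix.map_apply]
    · intro j
      fin_cases j <;> norm_num
  · -- weighted optimality
    intro x hx
    obtain ⟨hAx, hbd⟩ := hx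
    have h0 := congrFun hAx 0
    simp [Matrix.mulVec, dotProduct, Fin.sum_univ_two, Matrix.map_apply] at h0
    simp [Fin.sum_univ_two]
    linarith
  · -- nonbasic at bounds
    intro j hj
    fin_cases j
    · exact absurd rfl (hj 0)
    · left; rfl
  · -- conclusion fails: dual part
    right
    rintro ⟨γ, lam, hγ, hlam, heq, hgr⟩
    -- π = 0
    have hc0 : (fun k : Fin 1 => ((![0,1] : Fin 2 → ℤ) ((fun _ : Fin 1 => (0 : Fin 2)) k) : ℝ)) = 0 := by
      funext k; simp
    have hπ : Matrix.vecMul (fun k : Fin 1 => ((![0,1] : Fin 2 → ℤ) ((fun _ : Fin 1 => (0:Fin 2)) k) : ℝ))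
        (((!![1,1] : Matrix (Fin 1) (Fin 2) ℤ).map (fun z : ℤ => (z : ℝ))).submatrix id
          (fun _ : Fin 1 => (0:Fin 2)))⁻¹ = 0 := by
      rw [hc0, Matrix.zero_vecMul]
    have h1 := congrFun heq 1
    rw [hπ] at h1
    simp [Matrix.mulVec_zero] at h1
    -- dual value
    rw [hπ] at hgr
    have hval : ((∑ i, (![1] : Fin 1 → ℝ) i * (0 : Fin 1 → ℝ) i) +
        ∑ j, (![1,2] : Fin 2 → ℝ) j * γ j) = γ 0 + 2 * γ 1 := by
      simp [Fin.sum_univ_two, Fin.sum_univ_one]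
    obtain ⟨hmem, _⟩ := hgr
    obtain ⟨x, hx, hxv⟩ := hmem
    obtain ⟨hAx, hbd⟩ := hx
    have h0 := congrFun hAx 0
    simp [Matrix.mulVec, dotProduct, Fin.sum_univ_two, Matrix.map_apply] at h0
    rw [hval] at hxv
    simp [Fin.sum_univ_two] at hxv
    have hγ0 := hγ 0
    have hγ1 := hγ 1
    have hlam1 := hlam 1
    have hx0 := (hbd 0).1
    linarith
end
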